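/- arXiv:1406.7287 — 7 statements merged into one kernel-verified Lean document; each statement's English description precedes it below -/
import Mathlib

section
/- There exists ε₀ > 0 such that for every ε with 0 ≤ ε ≤ ε₀ and every X ∈ ℝ^m × ℝ^n × ℝ^n, the matrix γ(X) − ε κ(X) is invertible. -/
open scoped Matrix.Norms.L2Operator

noncomputable section

lemma aux_l2opNorm_le_sum {p q : Type*} [Fintype p] [Fintype q] [DecidableEq q]
    (A : Matrix p q ℝ) : ‖A‖ ≤ ∑ i, ∑ j, |A i j| := by
  rw [Matrix.l2_opNorm_def]
  refine ContinuousLinearMap.opNorm_le_bound _ (by positivity) fun x => ?_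
  set y : EuclideanSpace ℝ p := Matrix.toEuclideanLin A x with hy
  have hxj : ∀ j, |x j| ≤ ‖x‖ := fun j => by
    rw [EuclideanSpace.norm_eq, ← Real.sqrt_sq_eq_abs]
    refine Real.sqrt_le_sqrt ?_
    calc x j ^ 2 = ‖x j‖ ^ 2 := by rw [Real.norm_eq_abs, sq_abs]
    _ ≤ _ := Finset.single_le_sum (f := fun i => ‖x i‖ ^ 2)
        (fun i _ => by positivity) (Finset.mem_univ j)
  have hyi : ∀ i, |y i| ≤ (∑ j, |A i j|) * ‖x‖ := by
    intro i
    have h1 : y i = ∑ j, A i j * x j := rfl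
    rw [h1, Finset.sum_mul]
    refine (Finset.abs_sum_le_sum_abs _ _).trans (Finset.sum_le_sum fun j _ => ?_)
    rw [abs_mul]
    exact mul_le_mul_of_nonneg_left (hxj j) (abs_nonneg _)
  calc ‖y‖ = Real.sqrt (∑ i, ‖y i‖ ^ 2) := EuclideanSpace.norm_eq y
  _ ≤ Real.sqrt (∑ i, ((∑ j, |A i j|) * ‖x‖) ^ 2) := Real.sqrt_le_sqrt
      (Finset.sum_le_sum fun i _ => by
        rw [Real.norm_eq_abs]
        exact pow_le_pow_left₀ (abs_nonneg _) (hyi i) 2)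
  _ ≤ Real.sqrt ((∑ i, (∑ j, |A i j|) * ‖x‖) ^ 2) := Real.sqrt_le_sqrt
      (Finset.sum_sq_le_sq_sum_of_nonneg (fun i _ => by positivity))
  _ = ∑ i, (∑ j, |A i j|) * ‖x‖ := Real.sqrt_sq (by positivity)
  _ = (∑ i, ∑ j, |A i j|) * ‖x‖ := by rw [Finset.sum_mul]

abbrev Idx (m n : ℕ) := Fin m ⊕ (Fin n ⊕ Fin n)

/-- The matrix `γ(X)` (which depends only on the `y`-component of `X`). -/
def gammaMat (m n : ℕ) (c : Fin m → ℝ) (k : Fin n → ℝ) (Γ Ω : ℝ)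
    (g : Fin m → Fin n → (Fin m → ℝ) → ℝ) (y : Fin m → ℝ) :
    Matrix (Idx m n) (Idx m n) ℝ :=
  Matrix.of fun i j =>
    match i, j with
    | .inl i, .inl j => if i = j then 1 / c i else 0
    | .inl i, .inr (.inl j) => -(g i j y / c i)
    | .inl _, .inr (.inr _) => 0
    | .inr (.inl _), .inl _ => 0
    | .inr (.inl _), .inr (.inl _) => 0
    | .inr (.inl i), .inr (.inr j) => if i = j then -(Γ / Ω ^ 2) * (1 / k i) else 0
    | .inr (.inr _), .inl _ => 0
    | .inr (.inr i), .inr (.inl j) => if i = j then Γ * (1 / k i) else 0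
    | .inr (.inr i), .inr (.inr j) => if i = j then (Γ ^ 2 / Ω ^ 2) * (1 / k i) else 0

/-- The matrix `κ(X)` (which depends only on the `y`-component of `X`). -/
def kappaMat (m n : ℕ) (c : Fin m → ℝ) (f : Fin m → (Fin m → ℝ) → ℝ) (y : Fin m → ℝ) :
    Matrix (Idx m n) (Idx m n) ℝ :=
  Matrix.of fun i j =>
    match i, j with
    | .inl i, .inl j => (c j / c i) * fderiv ℝ (f i) y (Pi.single j 1)
    | _, _ => (0 : ℝ)

theorem statement0 (m n : ℕ) (hm : 0 < m) (hn : 0 < n)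
    (c : Fin m → ℝ) (hc : ∀ i, 0 < c i) (k : Fin n → ℝ) (hk : ∀ j, 0 < k j)
    (Γ Ω : ℝ) (hΓ : 0 < Γ) (hΩ : 0 < Ω)
    (g : Fin m → Fin n → (Fin m → ℝ) → ℝ)
    (hg_diff : ∀ i j, Differentiable ℝ (g i j))
    (hg_deriv_cont : ∀ i j, Continuous (fderiv ℝ (g i j)))
    (hg_bdd : ∀ i j, ∃ C, ∀ y, |g i j y| ≤ C)
    (hg_deriv_bdd : ∀ i j, ∃ C, ∀ y, ‖fderiv ℝ (g i j) y‖ ≤ C)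
    (f : Fin m → (Fin m → ℝ) → ℝ)
    (hf_diff : ∀ i, Differentiable ℝ (f i))
    (hf_deriv_cont : ∀ i, Continuous (fderiv ℝ (f i)))
    (hf_deriv_diff : ∀ i, Differentiable ℝ (fderiv ℝ (f i)))
    (hf_bdd : ∀ i, ∃ C, ∀ y, |f i y| ≤ C)
    (hf_deriv_bdd : ∀ i, ∃ C, ∀ y, ‖fderiv ℝ (f i) y‖ ≤ C)
    (hf_deriv2_bdd : ∀ i, ∃ C, ∀ y, ‖fderiv ℝ (fderiv ℝ (f i)) y‖ ≤ C) :
    ∃ ε₀ > (0:ℝ), ∀ ε : ℝ, 0 ≤ ε → ε ≤ ε₀ →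
      ∀ X : (Fin m → ℝ) × (Fin n → ℝ) × (Fin n → ℝ),
        IsUnit (gammaMat m n c k Γ Ω g X.1 - ε • kappaMat m n c f X.1) := by
  classical
  choose Cf hCf using hf_deriv_bdd
  have hCf0 : ∀ i, 0 ≤ Cf i := fun i => le_trans (norm_nonneg _) (hCf i 0)
  set K : ℝ := ∑ i : Fin m, ∑ j : Fin m, c j * Cf i with hKdef
  have hK0 : 0 ≤ K := Finset.sum_nonneg fun i _ =>
    Finset.sum_nonneg fun j _ => mul_nonneg (hc j).le (hCf0 i)
  refine ⟨1 / (K + 1), by positivity, fun ε hε0 hε X => ?_⟩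
  obtain ⟨y, ξ, ζ⟩ := X
  simp only
  -- the E-matrix
  set E : Matrix (Fin m) (Fin m) ℝ :=
    Matrix.of (fun i j => c j * fderiv ℝ (f i) y (Pi.single j 1)) with hEdef
  have hEnorm : ‖E‖ ≤ K := by
    refine (aux_l2opNorm_le_sum E).trans
      (Finset.sum_le_sum fun i _ => Finset.sum_le_sum fun j _ => ?_)
    show |c j * fderiv ℝ (f i) y (Pi.single j 1)| ≤ c j * Cf i
    rw [abs_mul, abs_of_pos (hc j)]
    refine mul_le_mul_of_nonneg_left ?_ (hc j).le
    calc |fderiv ℝ (f i) y (Pi.single j 1)|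
        = ‖fderiv ℝ (f i) y (Pi.single j 1)‖ := (Real.norm_eq_abs _).symm
      _ ≤ ‖fderiv ℝ (f i) y‖ * ‖(Pi.single j 1 : Fin m → ℝ)‖ := (fderiv ℝ (f i) y).le_opNorm _
      _ = ‖fderiv ℝ (f i) y‖ := by
          have h1 : ‖(Pi.single j 1 : Fin m → ℝ)‖ = ‖(1:ℝ)‖ :=
            Pi.norm_single (G := fun _ : Fin m => ℝ) (1:ℝ)
          rw [h1, norm_one, mul_one]
      _ ≤ Cf i := hCf i y
  haveI : CompleteSpace (Matrix (Fin m) (Fin m) ℝ) := FiniteDimensional.complete ℝ _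
  have hsm : ‖ε • E‖ < 1 := by
    rw [norm_smul, Real.norm_eq_abs, abs_of_nonneg hε0]
    have h1 : ε * ‖E‖ ≤ (1 / (K + 1)) * K :=
      mul_le_mul hε hEnorm (norm_nonneg _) (by positivity)
    have h2 : (1 / (K + 1)) * K < 1 := by
      rw [div_mul_eq_mul_div, one_mul, div_lt_one (by positivity)]; linarith
    linarith
  have hU1 : IsUnit (1 - ε • E) := ⟨Units.oneSub _ hsm, rfl⟩
  -- the top-left block
  set A : Matrix (Fin m) (Fin m) ℝ :=
    Matrix.of (fun i j => (if i = j then 1 / c i else 0)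
      - ε * ((c j / c i) * fderiv ℝ (f i) y (Pi.single j 1))) with hAdef
  have hAfac : A = Matrix.diagonal (fun i => 1 / c i) * (1 - ε • E) := by
    ext i j
    rw [Matrix.diagonal_mul]
    show (if i = j then 1 / c i else 0)
        - ε * ((c j / c i) * fderiv ℝ (f i) y (Pi.single j 1))
      = (1 / c i) * ((1 : Matrix (Fin m) (Fin m) ℝ) i j - ε * (E i j))
    rw [Matrix.one_apply]
    show _ = (1 / c i) * ((if i = j then (1:ℝ) else 0)
      - ε * (c j * fderiv ℝ (f i) y (Pi.single j 1)))
    have hci := (hc i).ne'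
    split <;> field_simp <;> ring
  have hA : IsUnit A := by
    rw [hAfac]
    refine IsUnit.mul ?_ hU1
    rw [Matrix.isUnit_iff_isUnit_det, Matrix.det_diagonal, isUnit_iff_ne_zero]
    exact Finset.prod_ne_zero_iff.mpr fun i _ => one_div_ne_zero (hc i).ne'
  -- blocks of C
  set P : Matrix (Fin n) (Fin n) ℝ := Matrix.diagonal (fun i => -(Γ / Ω ^ 2) * (1 / k i)) with hP
  set Q : Matrix (Fin n) (Fin n) ℝ := Matrix.diagonal (fun i => Γ * (1 / k i)) with hQ
  set R : Matrix (Fin n) (Fin n) ℝ := Matrix.diagonal (fun i => (Γ ^ 2 / Ω ^ 2) * (1 / k i)) with hR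
  set C : Matrix (Fin n ⊕ Fin n) (Fin n ⊕ Fin n) ℝ := Matrix.fromBlocks 0 P Q R with hCdef
  have hC : IsUnit C := by
    have hswap : C = (Matrix.fromBlocks (0 : Matrix (Fin n) (Fin n) ℝ) (1 : Matrix (Fin n) (Fin n) ℝ) (1 : Matrix (Fin n) (Fin n) ℝ) (0 : Matrix (Fin n) (Fin n) ℝ))
        * (Matrix.fromBlocks Q R 0 P) := by
      rw [Matrix.fromBlocks_multiply]
      simp [hCdef]
    rw [hswap]
    refine IsUnit.mul ?_ ?_
    · have hh : (Matrix.fromBlocks (0 : Matrix (Fin n) (Fin n) ℝ) (1 : Matrix (Fin n) (Fin n) ℝ) (1 : Matrix (Fin n) (Fin n) ℝ) (0 : Matrix (Fin n) (Fin n) ℝ))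
          * (Matrix.fromBlocks (0 : Matrix (Fin n) (Fin n) ℝ) (1 : Matrix (Fin n) (Fin n) ℝ) (1 : Matrix (Fin n) (Fin n) ℝ) (0 : Matrix (Fin n) (Fin n) ℝ)) = 1 := by
        rw [Matrix.fromBlocks_multiply]
        simp [Matrix.fromBlocks_one]
      exact ⟨⟨_, _, hh, hh⟩, rfl⟩
    · rw [Matrix.isUnit_iff_isUnit_det, Matrix.det_fromBlocks_zero₂₁, hQ, hP,
        Matrix.det_diagonal, Matrix.det_diagonal, isUnit_iff_ne_zero]
      refine mul_ne_zero ?_ ?_ <;>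
        refine Finset.prod_ne_zero_iff.mpr fun i _ => ?_
      · exact mul_ne_zero hΓ.ne' (one_div_ne_zero (hk i).ne')
      · refine mul_ne_zero (neg_ne_zero.mpr (div_ne_zero hΓ.ne' (by positivity)))
          (one_div_ne_zero (hk i).ne')
  -- the B block
  set B : Matrix (Fin m) (Fin n ⊕ Fin n) ℝ :=
    Matrix.of (fun i j => match j with
      | .inl j => -(g i j y / c i)
      | .inr _ => 0) with hBdef
  have hEq : gammaMat m n c k Γ Ω g y - ε • kappaMat m n c f y
      = Matrix.fromBlocks A B 0 C := by
    ext i j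
    rcases i with i | i | i <;> rcases j with j | j | j <;>
      simp [gammaMat, kappaMat, Matrix.fromBlocks, hAdef, hBdef, hCdef, hP, hQ, hR,
        Matrix.diagonal, Matrix.sub_apply, Matrix.smul_apply, Matrix.one_apply] <;>
      try ring
  rw [hEq, Matrix.isUnit_iff_isUnit_det, Matrix.det_fromBlocks_zero₂₁]
  exact ((Matrix.isUnit_iff_isUnit_det A).mp hA).mul ((Matrix.isUnit_iff_isUnit_det C).mp hC)
end
end

section
/- There exist ε₀ > 0 and C₁ > 0 such that for every ε with 0 ≤ ε ≤ ε₀ and every X ∈ ℝ^m × ℝ^n × ℝ^n, the matrix γ(X) − ε κ(X) is invertible and ‖(γ(X) − ε κ(X))^{-1}‖ < C₁. -/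
open scoped Matrix.Norms.L2Operator

noncomputable section

/-- Entrywise bound gives an operator-norm bound for the `L2` operator norm. -/
lemma l2_opNorm_le_of_entrywise {p q : Type*} [Fintype p] [Fintype q] [DecidableEq q]
    (A : Matrix p q ℝ) {β : ℝ} (hβ : 0 ≤ β) (h : ∀ i j, |A i j| ≤ β) :
    ‖A‖ ≤ Real.sqrt ((Fintype.card p : ℝ) * (Fintype.card q : ℝ)) * β := by
  rw [Matrix.l2_opNorm_def]
  refine ContinuousLinearMap.opNorm_le_bound _ (by positivity) fun x => ?_
  have hxnorm : ∑ j, (x j) ^ 2 = ‖x‖ ^ 2 := by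
    rw [EuclideanSpace.norm_eq]
    rw [Real.sq_sqrt (by positivity)]
    simp [sq_abs]
  have key : ∀ i, (∑ j, A i j * x j) ^ 2 ≤ ((Fintype.card q : ℝ) * β ^ 2) * ‖x‖ ^ 2 := by
    intro i
    calc (∑ j, A i j * x j) ^ 2 ≤ (∑ j, (A i j) ^ 2) * ∑ j, (x j) ^ 2 :=
          Finset.sum_mul_sq_le_sq_mul_sq _ _ _
      _ ≤ ((Fintype.card q : ℝ) * β ^ 2) * ‖x‖ ^ 2 := by
          rw [hxnorm]
          refine mul_le_mul_of_nonneg_right ?_ (by positivity)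
          calc ∑ j, (A i j) ^ 2 ≤ ∑ _j : q, β ^ 2 := by
                refine Finset.sum_le_sum fun j _ => ?_
                calc (A i j) ^ 2 = |A i j| ^ 2 := (sq_abs _).symm
                  _ ≤ β ^ 2 := pow_le_pow_left₀ (abs_nonneg _) (h i j) 2
            _ = (Fintype.card q : ℝ) * β ^ 2 := by
                simp [Finset.sum_const, nsmul_eq_mul]
  have : ‖(Matrix.toEuclideanLin (𝕜 := ℝ) A) x‖ ≤
      Real.sqrt ((Fintype.card p : ℝ) * (Fintype.card q : ℝ)) * β * ‖x‖ := by
    rw [Matrix.toEuclideanLin_apply, EuclideanSpace.norm_eq]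
    have hle : ∑ i, ‖(A.mulVec ((WithLp.equiv 2 (q → ℝ)) x)) i‖ ^ 2 ≤
        (Fintype.card p : ℝ) * ((Fintype.card q : ℝ) * β ^ 2) * ‖x‖ ^ 2 := by
      calc ∑ i, ‖(A.mulVec ((WithLp.equiv 2 (q → ℝ)) x)) i‖ ^ 2
          = ∑ i, (∑ j, A i j * x j) ^ 2 := by
            refine Finset.sum_congr rfl fun i _ => ?_
            rw [Real.norm_eq_abs, sq_abs]
            rfl
        _ ≤ ∑ _i : p, ((Fintype.card q : ℝ) * β ^ 2) * ‖x‖ ^ 2 :=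
            Finset.sum_le_sum fun i _ => key i
        _ = (Fintype.card p : ℝ) * ((Fintype.card q : ℝ) * β ^ 2) * ‖x‖ ^ 2 := by
            simp [Finset.sum_const, nsmul_eq_mul]; ring
    calc Real.sqrt (∑ i, ‖((WithLp.equiv 2 (p → ℝ)).symm
          (A.mulVec ((WithLp.equiv 2 (q → ℝ)) x))) i‖ ^ 2)
        = Real.sqrt (∑ i, ‖(A.mulVec ((WithLp.equiv 2 (q → ℝ)) x)) i‖ ^ 2) := by rfl
      _ ≤ Real.sqrt ((Fintype.card p : ℝ) * ((Fintype.card q : ℝ) * β ^ 2) * ‖x‖ ^ 2) :=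
          Real.sqrt_le_sqrt hle
      _ = Real.sqrt ((Fintype.card p : ℝ) * (Fintype.card q : ℝ)) * β * ‖x‖ := by
          rw [show (Fintype.card p : ℝ) * ((Fintype.card q : ℝ) * β ^ 2) * ‖x‖ ^ 2
              = ((Fintype.card p : ℝ) * (Fintype.card q : ℝ)) * (β * ‖x‖) ^ 2 by ring,
            Real.sqrt_mul (by positivity), Real.sqrt_sq (by positivity), mul_assoc]
  simpa [LinearEquiv.trans_apply] using this

/-- Quantitative perturbation of a unit in a complete normed ring. -/
lemma isUnit_sub_and_norm_inverse_le {R : Type*} [NormedRing R] [CompleteSpace R]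
    (u : Rˣ) (t : R) (h : ‖(↑u⁻¹ : R) * t‖ ≤ 1 / 2) :
    IsUnit ((u : R) - t) ∧
      ‖Ring.inverse ((u : R) - t)‖ ≤ (‖(1 : R)‖ + 1) * ‖(↑u⁻¹ : R)‖ := by
  set s : R := (↑u⁻¹ : R) * t with hs_def
  have hs : ‖s‖ < 1 := lt_of_le_of_lt h (by norm_num)
  set w : Rˣ := Units.oneSub s hs with hw
  have hval : ((u * w : Rˣ) : R) = (u : R) - t := by
    have h0 : (u : R) * ((↑u⁻¹ : R) * t) = t := by
      rw [← mul_assoc, u.mul_inv, one_mul]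
    simp only [Units.val_mul, hw, Units.val_oneSub, mul_sub, mul_one, hs_def, h0]
  refine ⟨hval ▸ (u * w).isUnit, ?_⟩
  rw [← hval, Ring.inverse_unit]
  have hrw : ((u * w)⁻¹ : Rˣ) = w⁻¹ * u⁻¹ := mul_inv_rev u w
  rw [hrw, Units.val_mul]
  have h1 : ‖(↑w⁻¹ : R)‖ ≤ ‖(1 : R)‖ + 1 := by
    have hcoe : (↑w⁻¹ : R) = ∑' n : ℕ, s ^ n := rfl
    rw [hcoe]
    have h2 := tsum_geometric_le_of_norm_lt_one s hs
    have h3 : (1 - ‖s‖)⁻¹ ≤ 2 := by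
      rw [show (2:ℝ) = (1/2 : ℝ)⁻¹ by norm_num]
      apply inv_anti₀ (by norm_num)
      linarith
    linarith
  calc ‖(↑w⁻¹ : R) * (↑u⁻¹ : R)‖ ≤ ‖(↑w⁻¹ : R)‖ * ‖(↑u⁻¹ : R)‖ := norm_mul_le _ _
    _ ≤ (‖(1 : R)‖ + 1) * ‖(↑u⁻¹ : R)‖ := mul_le_mul_of_nonneg_right h1 (norm_nonneg _)

/-- Explicit inverse of `gammaMat`. -/
def gammaInv (m n : ℕ) (c : Fin m → ℝ) (k : Fin n → ℝ) (Γ Ω : ℝ)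
    (g : Fin m → Fin n → (Fin m → ℝ) → ℝ) (y : Fin m → ℝ) :
    Matrix (Idx m n) (Idx m n) ℝ :=
  Matrix.of fun i j =>
    match i, j with
    | .inl i, .inl j => if i = j then c i else 0
    | .inl i, .inr (.inl j) => g i j y * k j
    | .inl i, .inr (.inr j) => g i j y * k j / Γ
    | .inr (.inl _), .inl _ => 0
    | .inr (.inl i), .inr (.inl j) => if i = j then k i else 0
    | .inr (.inl i), .inr (.inr j) => if i = j then k i / Γ else 0
    | .inr (.inr _), .inl _ => 0
    | .inr (.inr i), .inr (.inl j) => if i = j then -(Ω ^ 2 / Γ) * k i else 0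
    | .inr (.inr _), .inr (.inr _) => 0

lemma gamma_mul_gammaInv (m n : ℕ) (c : Fin m → ℝ) (k : Fin n → ℝ) (Γ Ω : ℝ)
    (g : Fin m → Fin n → (Fin m → ℝ) → ℝ) (y : Fin m → ℝ)
    (hc : ∀ i, c i ≠ 0) (hk : ∀ j, k j ≠ 0) (hΓ : Γ ≠ 0) (hΩ : Ω ≠ 0) :
    gammaMat m n c k Γ Ω g y * gammaInv m n c k Γ Ω g y = 1 := by
  ext i j
  rcases i with i | i | i <;> rcases j with j | j | j <;>
    simp only [Matrix.mul_apply, gammaMat, gammaInv, Matrix.of_apply, Fintype.sum_sum_type,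
      Matrix.one_apply, ite_mul, mul_ite, zero_mul, mul_zero, Finset.sum_ite_eq,
      Finset.sum_ite_eq', Finset.mem_univ, if_true, Sum.inl.injEq, Sum.inr.injEq,
      Finset.sum_const_zero, add_zero, zero_add, mul_neg, neg_mul, Finset.sum_neg_distrib,
      reduceCtorEq] <;>
    (try split_ifs with h) <;>
    first
      | (simp_all; done)
      | (field_simp [hc i, hk j, hΓ, hΩ]; done)
      | (field_simp [hc i, hk j, hΓ, hΩ]; ring)
      | (field_simp [hk j, hΓ, hΩ]; done)
      | (field_simp [hk j, hΓ, hΩ]; ring)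
      | (field_simp [hk i, hΓ, hΩ]; done)
      | (field_simp [hk i, hΓ, hΩ]; ring)
      | (field_simp [hc i, hΓ, hΩ]; done)
      | (field_simp [hc i, hΓ, hΩ]; ring)
      | skip
  all_goals (subst h; field_simp [hk i, hΓ, hΩ])
  all_goals ring

lemma half_arith (M K : ℝ) (hM : M ≠ 0) (hK : K ≠ 0) :
    M * ((1 / (2 * M * K)) * K) = 1 / 2 := by
  field_simp

set_option maxHeartbeats 1000000

theorem statement1 (m n : ℕ) (hm : 0 < m) (hn : 0 < n)
    (c : Fin m → ℝ) (hc : ∀ i, 0 < c i) (k : Fin n → ℝ) (hk : ∀ j, 0 < k j)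
    (Γ Ω : ℝ) (hΓ : 0 < Γ) (hΩ : 0 < Ω)
    (g : Fin m → Fin n → (Fin m → ℝ) → ℝ)
    (hg_diff : ∀ i j, Differentiable ℝ (g i j))
    (hg_deriv_cont : ∀ i j, Continuous (fderiv ℝ (g i j)))
    (hg_bdd : ∀ i j, ∃ C, ∀ y, |g i j y| ≤ C)
    (hg_deriv_bdd : ∀ i j, ∃ C, ∀ y, ‖fderiv ℝ (g i j) y‖ ≤ C)
    (f : Fin m → (Fin m → ℝ) → ℝ)
    (hf_diff : ∀ i, Differentiable ℝ (f i))
    (hf_deriv_cont : ∀ i, Continuous (fderiv ℝ (f i)))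
    (hf_deriv_diff : ∀ i, Differentiable ℝ (fderiv ℝ (f i)))
    (hf_bdd : ∀ i, ∃ C, ∀ y, |f i y| ≤ C)
    (hf_deriv_bdd : ∀ i, ∃ C, ∀ y, ‖fderiv ℝ (f i) y‖ ≤ C)
    (hf_deriv2_bdd : ∀ i, ∃ C, ∀ y, ‖fderiv ℝ (fderiv ℝ (f i)) y‖ ≤ C) :
    ∃ ε₀ > (0:ℝ), ∃ C₁ > (0:ℝ), ∀ ε : ℝ, 0 ≤ ε → ε ≤ ε₀ →
      ∀ X : (Fin m → ℝ) × (Fin n → ℝ) × (Fin n → ℝ),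
        IsUnit (gammaMat m n c k Γ Ω g X.1 - ε • kappaMat m n c f X.1) ∧
          ‖(gammaMat m n c k Γ Ω g X.1 - ε • kappaMat m n c f X.1)⁻¹‖ < C₁ := by
  classical
  choose Cg hCg using hg_bdd
  choose Cf hCf using hf_deriv_bdd
  haveI hmne : Nonempty (Fin m) := ⟨⟨0, hm⟩⟩
  haveI hnne : Nonempty (Fin n) := ⟨⟨0, hn⟩⟩
  -- global bound for g
  set G : ℝ := ∑ i : Fin m, ∑ j : Fin n, max (Cg i j) 0 with hGdef
  have hGnn : 0 ≤ G :=
    Finset.sum_nonneg fun i _ => Finset.sum_nonneg fun j _ => le_max_right _ _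
  have hG : ∀ i j y, |g i j y| ≤ G := by
    intro i j y
    have h1 : |g i j y| ≤ max (Cg i j) 0 := le_trans (hCg i j y) (le_max_left _ _)
    have h2 : max (Cg i j) 0 ≤ ∑ j' : Fin n, max (Cg i j') 0 :=
      Finset.single_le_sum (f := fun j' => max (Cg i j') 0)
        (fun j' _ => le_max_right _ _) (Finset.mem_univ j)
    have h3 : ∑ j' : Fin n, max (Cg i j') 0 ≤ G :=
      Finset.single_le_sum (f := fun i' => ∑ j' : Fin n, max (Cg i' j') 0)
        (fun i' _ => Finset.sum_nonneg fun j' _ => le_max_right _ _) (Finset.mem_univ i)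
    linarith
  set Sc : ℝ := ∑ i, c i with hScdef
  set Sk : ℝ := ∑ j, k j with hSkdef
  have hSc : 0 < Sc := Finset.sum_pos (fun i _ => hc i) Finset.univ_nonempty
  have hSk : 0 < Sk := Finset.sum_pos (fun j _ => hk j) Finset.univ_nonempty
  have hScle : ∀ i, c i ≤ Sc := fun i =>
    Finset.single_le_sum (fun i' _ => (hc i').le) (Finset.mem_univ i)
  have hSkle : ∀ j, k j ≤ Sk := fun j =>
    Finset.single_le_sum (fun j' _ => (hk j').le) (Finset.mem_univ j)
  have h1Γ : 0 < 1 / Γ := by positivity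
  set β : ℝ := Sc + (G + 1 + Ω ^ 2) * (1 + 1 / Γ) * Sk with hβdef
  have hcoeffnn : 0 ≤ (G + 1 + Ω ^ 2) * (1 + 1 / Γ) := by nlinarith [sq_nonneg Ω]
  have hterm : 0 ≤ (G + 1 + Ω ^ 2) * (1 + 1 / Γ) * Sk := mul_nonneg hcoeffnn hSk.le
  have hβnn : 0 ≤ β := by rw [hβdef]; linarith
  have hkey : ∀ a b : ℝ, 0 ≤ a → a ≤ (G + 1 + Ω ^ 2) * (1 + 1 / Γ) → 0 ≤ b → b ≤ Sk →
      a * b ≤ β := by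
    intro a b ha ha' hb hb'
    have : a * b ≤ (G + 1 + Ω ^ 2) * (1 + 1 / Γ) * Sk := mul_le_mul ha' hb' hb hcoeffnn
    rw [hβdef]; linarith
  have hG_le : G ≤ (G + 1 + Ω ^ 2) * (1 + 1 / Γ) := by nlinarith [sq_nonneg Ω]
  have hGΓ_le : G * (1 / Γ) ≤ (G + 1 + Ω ^ 2) * (1 + 1 / Γ) := by nlinarith [sq_nonneg Ω]
  have hone_le : (1 : ℝ) ≤ (G + 1 + Ω ^ 2) * (1 + 1 / Γ) := by nlinarith [sq_nonneg Ω]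
  have hΓinv_le : 1 / Γ ≤ (G + 1 + Ω ^ 2) * (1 + 1 / Γ) := by nlinarith [sq_nonneg Ω]
  have hΩΓ_le : Ω ^ 2 * (1 / Γ) ≤ (G + 1 + Ω ^ 2) * (1 + 1 / Γ) := by
    nlinarith [sq_nonneg Ω]
  have hβentry : ∀ y i j, |gammaInv m n c k Γ Ω g y i j| ≤ β := by
    intro y i j
    rcases i with i | i | i <;> rcases j with j | j | j
    · show |(if i = j then c i else 0)| ≤ β
      split_ifs with h
      · rw [abs_of_pos (hc i)]; rw [hβdef]; linarith [hScle i]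
      · rw [abs_zero]; exact hβnn
    · show |g i j y * k j| ≤ β
      rw [abs_mul, abs_of_pos (hk j)]
      exact hkey _ _ (abs_nonneg _) (le_trans (hG i j y) hG_le) (hk j).le (hSkle j)
    · show |g i j y * k j / Γ| ≤ β
      rw [show g i j y * k j / Γ = (g i j y * (1/Γ)) * k j by ring,
        abs_mul, abs_of_pos (hk j), abs_mul, abs_of_pos h1Γ]
      refine hkey _ _ (mul_nonneg (abs_nonneg _) h1Γ.le) ?_ (hk j).le (hSkle j)
      calc |g i j y| * (1 / Γ) ≤ G * (1 / Γ) :=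
            mul_le_mul_of_nonneg_right (hG i j y) h1Γ.le
        _ ≤ _ := hGΓ_le
    · show |(0:ℝ)| ≤ β
      rw [abs_zero]; exact hβnn
    · show |(if i = j then k i else 0)| ≤ β
      split_ifs with h
      · rw [abs_of_pos (hk i)]
        calc k i = 1 * k i := (one_mul _).symm
          _ ≤ β := hkey _ _ zero_le_one hone_le (hk i).le (hSkle i)
      · rw [abs_zero]; exact hβnn
    · show |(if i = j then k i / Γ else 0)| ≤ β
      split_ifs with h
      · rw [abs_of_pos (div_pos (hk i) hΓ)]
        calc k i / Γ = (1 / Γ) * k i := by ring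
          _ ≤ β := hkey _ _ h1Γ.le hΓinv_le (hk i).le (hSkle i)
      · rw [abs_zero]; exact hβnn
    · show |(0:ℝ)| ≤ β
      rw [abs_zero]; exact hβnn
    · show |(if i = j then -(Ω ^ 2 / Γ) * k i else 0)| ≤ β
      split_ifs with h
      · rw [show -(Ω ^ 2 / Γ) * k i = -((Ω ^ 2 * (1 / Γ)) * k i) by ring, abs_neg,
          abs_of_pos (mul_pos (mul_pos (pow_pos hΩ 2) h1Γ) (hk i))]
        exact hkey _ _ (mul_nonneg (sq_nonneg Ω) h1Γ.le) hΩΓ_le (hk i).le (hSkle i)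
      · rw [abs_zero]; exact hβnn
    · show |(0:ℝ)| ≤ β
      rw [abs_zero]; exact hβnn
  -- bound for kappa
  set βκ : ℝ := ∑ i : Fin m, ∑ j : Fin m, (c j / c i) * max (Cf i) 0 with hβκdef
  have hβκnn : 0 ≤ βκ :=
    Finset.sum_nonneg fun i _ => Finset.sum_nonneg fun j _ =>
      mul_nonneg (div_pos (hc j) (hc i)).le (le_max_right _ _)
  have hκentry : ∀ y i j, |kappaMat m n c f y i j| ≤ βκ := by
    intro y i j
    rcases i with i | i | i <;> rcases j with j | j | j
    · show |(c j / c i) * fderiv ℝ (f i) y (Pi.single j 1)| ≤ βκ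
      have hdiv : 0 < c j / c i := div_pos (hc j) (hc i)
      have h1 : |fderiv ℝ (f i) y (Pi.single j 1)| ≤ max (Cf i) 0 := by
        have h2 := (fderiv ℝ (f i) y).le_opNorm (Pi.single j (1:ℝ))
        rw [Pi.norm_single, norm_one, mul_one, Real.norm_eq_abs] at h2
        exact le_trans h2 (le_trans (hCf i y) (le_max_left _ _))
      calc |(c j / c i) * fderiv ℝ (f i) y (Pi.single j 1)|
          = (c j / c i) * |fderiv ℝ (f i) y (Pi.single j 1)| := by
            rw [abs_mul, abs_of_pos hdiv]
        _ ≤ (c j / c i) * max (Cf i) 0 := mul_le_mul_of_nonneg_left h1 hdiv.le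
        _ ≤ ∑ j' : Fin m, (c j' / c i) * max (Cf i) 0 :=
            Finset.single_le_sum (f := fun j' => (c j' / c i) * max (Cf i) 0)
              (fun j' _ => mul_nonneg (div_pos (hc j') (hc i)).le (le_max_right _ _))
              (Finset.mem_univ j)
        _ ≤ βκ :=
            Finset.single_le_sum (f := fun i' => ∑ j' : Fin m, (c j' / c i') * max (Cf i') 0)
              (fun i' _ => Finset.sum_nonneg fun j' _ =>
                mul_nonneg (div_pos (hc j') (hc i')).le (le_max_right _ _))
              (Finset.mem_univ i)
    all_goals (show |(0:ℝ)| ≤ βκ; rw [abs_zero]; exact hβκnn)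
  -- norm bounds
  set cc : ℝ := Real.sqrt ((Fintype.card (Idx m n) : ℝ) * (Fintype.card (Idx m n) : ℝ))
    with hccdef
  have hccnn : 0 ≤ cc := Real.sqrt_nonneg _
  set M : ℝ := cc * β + 1 with hMdef
  set K : ℝ := cc * βκ + 1 with hKdef
  have hM : 0 < M := by
    have : 0 ≤ cc * β := mul_nonneg hccnn hβnn
    rw [hMdef]; linarith
  have hK : 0 < K := by
    have : 0 ≤ cc * βκ := mul_nonneg hccnn hβκnn
    rw [hKdef]; linarith
  have hMbound : ∀ y, ‖gammaInv m n c k Γ Ω g y‖ ≤ M := by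
    intro y
    have := l2_opNorm_le_of_entrywise (gammaInv m n c k Γ Ω g y) hβnn (hβentry y)
    rw [hMdef]; rw [hccdef]; linarith
  have hKbound : ∀ y, ‖kappaMat m n c f y‖ ≤ K := by
    intro y
    have := l2_opNorm_le_of_entrywise (kappaMat m n c f y) hβκnn (hκentry y)
    rw [hKdef]; rw [hccdef]; linarith
  set nrm1 : ℝ := ‖(1 : Matrix (Idx m n) (Idx m n) ℝ)‖ with hnrm1def
  have hnrm1 : 0 ≤ nrm1 := norm_nonneg _
  have hMK : 0 < 2 * M * K := mul_pos (mul_pos two_pos hM) hK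
  refine ⟨1 / (2 * M * K), one_div_pos.mpr hMK, (nrm1 + 1) * M + 1, ?_, ?_⟩
  · have : 0 ≤ (nrm1 + 1) * M := mul_nonneg (by linarith) hM.le
    linarith
  intro ε hε0 hεε₀ X
  set y := X.1 with hydef
  have hmul1 : gammaMat m n c k Γ Ω g y * gammaInv m n c k Γ Ω g y = 1 :=
    gamma_mul_gammaInv m n c k Γ Ω g y (fun i => (hc i).ne') (fun j => (hk j).ne')
      hΓ.ne' hΩ.ne'
  have hmul2 : gammaInv m n c k Γ Ω g y * gammaMat m n c k Γ Ω g y = 1 :=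
    mul_eq_one_comm.mp hmul1
  let u : (Matrix (Idx m n) (Idx m n) ℝ)ˣ :=
    ⟨gammaMat m n c k Γ Ω g y, gammaInv m n c k Γ Ω g y, hmul1, hmul2⟩
  have hu_inv : (↑u⁻¹ : Matrix (Idx m n) (Idx m n) ℝ) = gammaInv m n c k Γ Ω g y := rfl
  have hu_val : (↑u : Matrix (Idx m n) (Idx m n) ℝ) = gammaMat m n c k Γ Ω g y := rfl
  have hγInvnorm : ‖(↑u⁻¹ : Matrix (Idx m n) (Idx m n) ℝ)‖ ≤ M := by
    rw [hu_inv]; exact hMbound y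
  have hprod : ‖(↑u⁻¹ : Matrix (Idx m n) (Idx m n) ℝ) * (ε • kappaMat m n c f y)‖ ≤ 1 / 2 := by
    have hsmul : ‖ε • kappaMat m n c f y‖ ≤ ε * K := by
      rw [norm_smul, Real.norm_eq_abs, abs_of_nonneg hε0]
      exact mul_le_mul_of_nonneg_left (hKbound y) hε0
    calc ‖(↑u⁻¹ : Matrix (Idx m n) (Idx m n) ℝ) * (ε • kappaMat m n c f y)‖
        ≤ ‖(↑u⁻¹ : Matrix (Idx m n) (Idx m n) ℝ)‖ * ‖ε • kappaMat m n c f y‖ :=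
          norm_mul_le _ _
      _ ≤ M * (ε * K) :=
          mul_le_mul hγInvnorm hsmul (norm_nonneg _) hM.le
      _ ≤ 1 / 2 := by
          have h1 : ε * K ≤ (1 / (2 * M * K)) * K := mul_le_mul_of_nonneg_right hεε₀ hK.le
          have h2 : M * (ε * K) ≤ M * ((1 / (2 * M * K)) * K) :=
            mul_le_mul_of_nonneg_left h1 hM.le
          have h3 : M * ((1 / (2 * M * K)) * K) = 1 / 2 :=
            half_arith M K hM.ne' hK.ne'
          linarith
  obtain ⟨hUnit, hNorm⟩ :=
    isUnit_sub_and_norm_inverse_le u (ε • kappaMat m n c f y) hprod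
  constructor
  · exact hUnit
  · rw [Matrix.nonsing_inv_eq_ringInverse]
    calc ‖Ring.inverse (gammaMat m n c k Γ Ω g y - ε • kappaMat m n c f y)‖
        ≤ (nrm1 + 1) * ‖(↑u⁻¹ : Matrix (Idx m n) (Idx m n) ℝ)‖ := hNorm
      _ ≤ (nrm1 + 1) * M := mul_le_mul_of_nonneg_left hγInvnorm (by linarith)
      _ < (nrm1 + 1) * M + 1 := by linarith
end
end

section
/- There exist ε₀ > 0 and C > 0 such that for every ε with 0 ≤ ε ≤ ε₀, the map X ↦ (γ(X) − ε κ(X))^{-1} is differentiable on ℝ^{m+2n} and for every X ∈ ℝ^m × ℝ^n × ℝ^n and every coordinate index 1 ≤ l ≤ m+2n, ‖∂/∂X_l [ (γ(X) − ε κ(X))^{-1} ]‖ < C. -/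
open scoped Matrix.Norms.L2Operator

noncomputable section

/-- The standard basis vector of `ℝ^m × ℝ^n × ℝ^n` corresponding to coordinate `l`. -/
def coordVec (m n : ℕ) (l : Idx m n) : (Fin m → ℝ) × (Fin n → ℝ) × (Fin n → ℝ) :=
  match l with
  | .inl i => (Pi.single i 1, 0, 0)
  | .inr (.inl j) => (0, Pi.single j 1, 0)
  | .inr (.inr j) => (0, 0, Pi.single j 1)

def gammaConst (m n : ℕ) (c : Fin m → ℝ) (k : Fin n → ℝ) (Γ Ω : ℝ) :
    Matrix (Idx m n) (Idx m n) ℝ :=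
  Matrix.of fun i j =>
    match i, j with
    | .inl i, .inl j => if i = j then 1 / c i else 0
    | .inr (.inl i), .inr (.inr j) => if i = j then -(Γ / Ω ^ 2) * (1 / k i) else 0
    | .inr (.inr i), .inr (.inl j) => if i = j then Γ * (1 / k i) else 0
    | .inr (.inr i), .inr (.inr j) => if i = j then (Γ ^ 2 / Ω ^ 2) * (1 / k i) else 0
    | _, _ => 0

def gammaInvConst (m n : ℕ) (c : Fin m → ℝ) (k : Fin n → ℝ) (Γ Ω : ℝ) :
    Matrix (Idx m n) (Idx m n) ℝ :=
  Matrix.of fun i j =>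
    match i, j with
    | .inl i, .inl j => if i = j then c i else 0
    | .inr (.inl i), .inr (.inl j) => if i = j then k i else 0
    | .inr (.inl i), .inr (.inr j) => if i = j then k i / Γ else 0
    | .inr (.inr i), .inr (.inl j) => if i = j then -(Ω ^ 2 / Γ) * k i else 0
    | _, _ => 0

def gmat (m n : ℕ) (c : Fin m → ℝ) (i : Fin m) (j : Fin n) : Matrix (Idx m n) (Idx m n) ℝ :=
  Matrix.single (Sum.inl i) (Sum.inr (Sum.inl j)) (-(1 / c i))

def ginvmat (m n : ℕ) (k : Fin n → ℝ) (Γ : ℝ) (i : Fin m) (j : Fin n) :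
    Matrix (Idx m n) (Idx m n) ℝ :=
  Matrix.single (Sum.inl i) (Sum.inr (Sum.inl j)) (k j) +
    Matrix.single (Sum.inl i) (Sum.inr (Sum.inr j)) (k j / Γ)

def kmat (m n : ℕ) (c : Fin m → ℝ) (i j : Fin m) : Matrix (Idx m n) (Idx m n) ℝ :=
  Matrix.single (Sum.inl i) (Sum.inl j) (c j / c i)

/-! ### Decomposition lemmas -/

theorem gammaMat_decomp (m n : ℕ) (c : Fin m → ℝ) (k : Fin n → ℝ) (Γ Ω : ℝ)
    (g : Fin m → Fin n → (Fin m → ℝ) → ℝ) (y : Fin m → ℝ) :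
    gammaMat m n c k Γ Ω g y =
      gammaConst m n c k Γ Ω + ∑ i : Fin m, ∑ j : Fin n, g i j y • gmat m n c i j := by
  ext p q
  rcases p with i | p <;> [skip; rcases p with i | i] <;>
    rcases q with j | q <;> [skip; rcases q with j | j; skip; rcases q with j | j; skip;
      rcases q with j | j] <;>
  · simp [gammaMat, gammaConst, gmat, Matrix.sum_apply, Matrix.single,
      Finset.sum_ite_eq, Finset.sum_ite_eq', ite_and, mul_comm, div_eq_mul_inv]
    try ring

theorem gammaInv_decomp (m n : ℕ) (c : Fin m → ℝ) (k : Fin n → ℝ) (Γ Ω : ℝ)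
    (g : Fin m → Fin n → (Fin m → ℝ) → ℝ) (y : Fin m → ℝ) :
    gammaInv m n c k Γ Ω g y =
      gammaInvConst m n c k Γ Ω + ∑ i : Fin m, ∑ j : Fin n, g i j y • ginvmat m n k Γ i j := by
  ext p q
  rcases p with i | p <;> [skip; rcases p with i | i] <;>
    rcases q with j | q <;> [skip; rcases q with j | j; skip; rcases q with j | j; skip;
      rcases q with j | j] <;>
  · simp [gammaInv, gammaInvConst, ginvmat, Matrix.sum_apply, Matrix.single,
      Finset.sum_ite_eq, Finset.sum_ite_eq', ite_and, mul_comm, div_eq_mul_inv]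
    try ring

theorem kappaMat_decomp (m n : ℕ) (c : Fin m → ℝ) (f : Fin m → (Fin m → ℝ) → ℝ)
    (y : Fin m → ℝ) :
    kappaMat m n c f y =
      ∑ i : Fin m, ∑ j : Fin m, (fderiv ℝ (f i) y (Pi.single j 1)) • kmat m n c i j := by
  ext p q
  rcases p with i | p <;> [skip; rcases p with i | i] <;>
    rcases q with j | q <;> [skip; rcases q with j | j; skip; rcases q with j | j; skip;
      rcases q with j | j] <;>
  · simp [kappaMat, kmat, Matrix.sum_apply, Matrix.single,
      Finset.sum_ite_eq, Finset.sum_ite_eq', ite_and, mul_comm, div_eq_mul_inv]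
    try ring

theorem gamma_mul_inv (m n : ℕ) (c : Fin m → ℝ) (hc : ∀ i, 0 < c i) (k : Fin n → ℝ)
    (hk : ∀ j, 0 < k j) (Γ Ω : ℝ) (hΓ : 0 < Γ) (hΩ : 0 < Ω)
    (g : Fin m → Fin n → (Fin m → ℝ) → ℝ) (y : Fin m → ℝ) :
    gammaMat m n c k Γ Ω g y * gammaInv m n c k Γ Ω g y = 1 := by
  ext p q
  have hcne : ∀ i, c i ≠ 0 := fun i => (hc i).ne'
  have hkne : ∀ j, k j ≠ 0 := fun j => (hk j).ne'
  have hΓne : Γ ≠ 0 := hΓ.ne'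
  have hΩne : Ω ≠ 0 := hΩ.ne'
  rcases p with i | p <;> [skip; rcases p with i | i] <;>
    rcases q with j | q <;> [skip; rcases q with j | j; skip; rcases q with j | j; skip;
      rcases q with j | j] <;>
  · simp only [Matrix.mul_apply, gammaMat, gammaInv, Matrix.of_apply, Fintype.sum_sum_type,
      Matrix.one_apply, ite_mul, mul_ite, zero_mul, mul_zero, Finset.sum_ite_eq,
      Finset.sum_ite_eq', Finset.mem_univ, if_true, Finset.sum_const_zero, add_zero, zero_add,
      Sum.inl.injEq, Sum.inr.injEq, neg_mul, mul_neg, neg_neg]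
    try split
    all_goals (try (rename_i h; try subst h))
    all_goals (try rfl)
    all_goals (try simp_all)
    all_goals field_simp [hcne, hkne, hΓne, hΩne]
    all_goals ring

theorem el_le_dsum {α β : Type*} [Fintype α] [Fintype β] (F : α → β → ℝ) (i : α) (j : β) :
    F i j ≤ ∑ a : α, ∑ b : β, |F a b| := by
  calc F i j ≤ |F i j| := le_abs_self _
    _ ≤ ∑ b : β, |F i b| :=
      Finset.single_le_sum (f := fun b => |F i b|) (fun b _ => abs_nonneg _) (Finset.mem_univ j)
    _ ≤ ∑ a : α, ∑ b : β, |F a b| :=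
      Finset.single_le_sum (f := fun a => ∑ b : β, |F a b|)
        (fun a _ => Finset.sum_nonneg fun b _ => abs_nonneg _) (Finset.mem_univ i)

theorem el_le_sum {α : Type*} [Fintype α] (F : α → ℝ) (i : α) : F i ≤ ∑ a : α, |F a| :=
  (le_abs_self _).trans <|
    Finset.single_le_sum (f := fun a => |F a|) (fun a _ => abs_nonneg _) (Finset.mem_univ i)

set_option maxHeartbeats 2000000 in
theorem statement2 (m n : ℕ) (hm : 0 < m) (hn : 0 < n)
    (c : Fin m → ℝ) (hc : ∀ i, 0 < c i) (k : Fin n → ℝ) (hk : ∀ j, 0 < k j)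
    (Γ Ω : ℝ) (hΓ : 0 < Γ) (hΩ : 0 < Ω)
    (g : Fin m → Fin n → (Fin m → ℝ) → ℝ)
    (hg_diff : ∀ i j, Differentiable ℝ (g i j))
    (hg_deriv_cont : ∀ i j, Continuous (fderiv ℝ (g i j)))
    (hg_bdd : ∀ i j, ∃ C, ∀ y, |g i j y| ≤ C)
    (hg_deriv_bdd : ∀ i j, ∃ C, ∀ y, ‖fderiv ℝ (g i j) y‖ ≤ C)
    (f : Fin m → (Fin m → ℝ) → ℝ)
    (hf_diff : ∀ i, Differentiable ℝ (f i))
    (hf_deriv_cont : ∀ i, Continuous (fderiv ℝ (f i)))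
    (hf_deriv_diff : ∀ i, Differentiable ℝ (fderiv ℝ (f i)))
    (hf_bdd : ∀ i, ∃ C, ∀ y, |f i y| ≤ C)
    (hf_deriv_bdd : ∀ i, ∃ C, ∀ y, ‖fderiv ℝ (f i) y‖ ≤ C)
    (hf_deriv2_bdd : ∀ i, ∃ C, ∀ y, ‖fderiv ℝ (fderiv ℝ (f i)) y‖ ≤ C) :
    ∃ ε₀ > (0:ℝ), ∃ C > (0:ℝ), ∀ ε : ℝ, 0 ≤ ε → ε ≤ ε₀ →
      Differentiable ℝ (fun X : (Fin m → ℝ) × (Fin n → ℝ) × (Fin n → ℝ) =>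
        (gammaMat m n c k Γ Ω g X.1 - ε • kappaMat m n c f X.1)⁻¹) ∧
      ∀ (X : (Fin m → ℝ) × (Fin n → ℝ) × (Fin n → ℝ)) (l : Idx m n),
        ‖fderiv ℝ (fun X : (Fin m → ℝ) × (Fin n → ℝ) × (Fin n → ℝ) =>
            (gammaMat m n c k Γ Ω g X.1 - ε • kappaMat m n c f X.1)⁻¹) X (coordVec m n l)‖
          < C := by
  classical
  choose Cg hCg using hg_bdd
  choose Cg' hCg' using hg_deriv_bdd
  choose Cf' hCf' using hf_deriv_bdd
  choose Cf'' hCf'' using hf_deriv2_bdd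
  set Bg : ℝ := ∑ i : Fin m, ∑ j : Fin n, |Cg i j| with hBgdef
  have hBg : ∀ i j y, |g i j y| ≤ Bg := fun i j y => (hCg i j y).trans (el_le_dsum Cg i j)
  have hBg0 : 0 ≤ Bg :=
    Finset.sum_nonneg fun _ _ => Finset.sum_nonneg fun _ _ => abs_nonneg _
  set Bg' : ℝ := ∑ i : Fin m, ∑ j : Fin n, |Cg' i j| with hBg'def
  have hBg' : ∀ i j y, ‖fderiv ℝ (g i j) y‖ ≤ Bg' := fun i j y =>
    (hCg' i j y).trans (el_le_dsum Cg' i j)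
  set Bf' : ℝ := ∑ i : Fin m, |Cf' i| with hBf'def
  have hBf' : ∀ i y, ‖fderiv ℝ (f i) y‖ ≤ Bf' := fun i y => (hCf' i y).trans (el_le_sum Cf' i)
  set Bf'' : ℝ := ∑ i : Fin m, |Cf'' i| with hBf''def
  have hBf'' : ∀ i y, ‖fderiv ℝ (fderiv ℝ (f i)) y‖ ≤ Bf'' := fun i y =>
    (hCf'' i y).trans (el_le_sum Cf'' i)
  -- norm bounds for gammaInv and kappaMat
  set G : ℝ := ‖gammaInvConst m n c k Γ Ω‖ +
      ∑ i : Fin m, ∑ j : Fin n, Bg * ‖ginvmat m n k Γ i j‖ with hGdef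
  have hGinv : ∀ y, ‖gammaInv m n c k Γ Ω g y‖ ≤ G := by
    intro y
    rw [gammaInv_decomp]
    refine (norm_add_le _ _).trans (add_le_add le_rfl ?_)
    refine (norm_sum_le _ _).trans (Finset.sum_le_sum fun i _ =>
      (norm_sum_le _ _).trans (Finset.sum_le_sum fun j _ => ?_))
    rw [norm_smul, Real.norm_eq_abs]
    exact mul_le_mul_of_nonneg_right (hBg i j y) (norm_nonneg _)
  have hG0 : 0 ≤ G := add_nonneg (norm_nonneg _)
    (Finset.sum_nonneg fun _ _ => Finset.sum_nonneg fun _ _ =>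
      mul_nonneg hBg0 (norm_nonneg _))
  set K : ℝ := ∑ i : Fin m, ∑ j : Fin m, Bf' * ‖kmat m n c i j‖ with hKdef
  have hBf'0 : 0 ≤ Bf' := Finset.sum_nonneg fun _ _ => abs_nonneg _
  have hBf''0 : 0 ≤ Bf'' := Finset.sum_nonneg fun _ _ => abs_nonneg _
  have hBg'0 : 0 ≤ Bg' := Finset.sum_nonneg fun _ _ => Finset.sum_nonneg fun _ _ => abs_nonneg _
  have hKb : ∀ y, ‖kappaMat m n c f y‖ ≤ K := by
    intro y
    rw [kappaMat_decomp]
    refine (norm_sum_le _ _).trans (Finset.sum_le_sum fun i _ =>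
      (norm_sum_le _ _).trans (Finset.sum_le_sum fun j _ => ?_))
    rw [norm_smul, Real.norm_eq_abs]
    refine mul_le_mul_of_nonneg_right ?_ (norm_nonneg _)
    calc |fderiv ℝ (f i) y (Pi.single j 1)| = ‖fderiv ℝ (f i) y (Pi.single j 1)‖ :=
          (Real.norm_eq_abs _).symm
      _ ≤ ‖fderiv ℝ (f i) y‖ * ‖(Pi.single j 1 : Fin m → ℝ)‖ :=
          ContinuousLinearMap.le_opNorm _ _
      _ = ‖fderiv ℝ (f i) y‖ := by rw [Pi.norm_single, norm_one, mul_one]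
      _ ≤ Bf' := hBf' i y
  have hK0 : 0 ≤ K := Finset.sum_nonneg fun _ _ => Finset.sum_nonneg fun _ _ =>
    mul_nonneg hBf'0 (norm_nonneg _)
  set D : ℝ := (∑ i : Fin m, ∑ j : Fin n, Bg' * ‖gmat m n c i j‖) +
      ∑ i : Fin m, ∑ j : Fin m, Bf'' * ‖kmat m n c i j‖ with hDdef
  have hD0 : 0 ≤ D := add_nonneg
    (Finset.sum_nonneg fun _ _ => Finset.sum_nonneg fun _ _ => mul_nonneg hBg'0 (norm_nonneg _))
    (Finset.sum_nonneg fun _ _ => Finset.sum_nonneg fun _ _ => mul_nonneg hBf''0 (norm_nonneg _))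
  set W : ℝ := ‖(1 : Matrix (Idx m n) (Idx m n) ℝ)‖ + 1 with hWdef
  have hW1 : 1 ≤ W := by
    have := norm_nonneg (1 : Matrix (Idx m n) (Idx m n) ℝ)
    rw [hWdef]; linarith
  clear_value Bg Bg' Bf' Bf'' G K D
  refine ⟨1 / (2 * (G * K + 1)),
    one_div_pos.mpr (by nlinarith [mul_nonneg hG0 hK0]),
    (W * G) ^ 2 * D + 1,
    by have h := mul_nonneg (sq_nonneg (W * G)) hD0; linarith, ?_⟩
  intro ε hε0 hε1
  have hGK0 : 0 ≤ G * K := mul_nonneg hG0 hK0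
  have h2pos : (0:ℝ) < 2 * (G * K + 1) := by positivity
  have hεprod : ε * (2 * (G * K + 1)) ≤ 1 := (le_div_iff₀ h2pos).mp hε1
  have hεGK : ε * (G * K) ≤ 1 / 2 := by nlinarith [mul_nonneg hε0 hGK0]
  have hεle1 : ε ≤ 1 := by nlinarith [mul_nonneg hε0 hGK0]
  -- units
  have hγmul : ∀ y, gammaMat m n c k Γ Ω g y * gammaInv m n c k Γ Ω g y = 1 := fun y =>
    gamma_mul_inv m n c hc k hk Γ Ω hΓ hΩ g y
  have hγmul' : ∀ y, gammaInv m n c k Γ Ω g y * gammaMat m n c k Γ Ω g y = 1 := fun y =>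
    mul_eq_one_comm.mp (hγmul y)
  set t : ((Fin m → ℝ) × (Fin n → ℝ) × (Fin n → ℝ)) → Matrix (Idx m n) (Idx m n) ℝ :=
    fun X => ε • (gammaInv m n c k Γ Ω g X.1 * kappaMat m n c f X.1) with htdef
  have htnorm : ∀ X, ‖t X‖ ≤ 1 / 2 := by
    intro X
    rw [htdef]
    calc ‖ε • (gammaInv m n c k Γ Ω g X.1 * kappaMat m n c f X.1)‖
        = |ε| * ‖gammaInv m n c k Γ Ω g X.1 * kappaMat m n c f X.1‖ := by
          rw [norm_smul, Real.norm_eq_abs]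
      _ ≤ ε * (G * K) := by
          rw [abs_of_nonneg hε0]
          refine mul_le_mul_of_nonneg_left ?_ hε0
          refine (norm_mul_le _ _).trans ?_
          exact mul_le_mul (hGinv X.1) (hKb X.1) (norm_nonneg _) hG0
      _ ≤ 1 / 2 := hεGK
  have htlt : ∀ X, ‖t X‖ < 1 := fun X => lt_of_le_of_lt (htnorm X) (by norm_num)
  set γu : (Fin m → ℝ) → (Matrix (Idx m n) (Idx m n) ℝ)ˣ := fun y =>
    ⟨gammaMat m n c k Γ Ω g y, gammaInv m n c k Γ Ω g y, hγmul y, hγmul' y⟩ with hγudef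
  set uf : ((Fin m → ℝ) × (Fin n → ℝ) × (Fin n → ℝ)) → (Matrix (Idx m n) (Idx m n) ℝ)ˣ :=
    fun X => γu X.1 * Units.oneSub (t X) (htlt X) with hufdef
  have hval : ∀ X, (uf X : Matrix (Idx m n) (Idx m n) ℝ) =
      gammaMat m n c k Γ Ω g X.1 - ε • kappaMat m n c f X.1 := by
    intro X
    show gammaMat m n c k Γ Ω g X.1 * (1 - t X) = _
    rw [htdef, mul_sub, mul_one, Matrix.mul_smul, ← Matrix.mul_assoc, hγmul, Matrix.one_mul]
  have huinv_norm : ∀ X, ‖((uf X)⁻¹ : (Matrix (Idx m n) (Idx m n) ℝ)ˣ).val‖ ≤ W * G := by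
    intro X
    have h1 : ((uf X)⁻¹ : (Matrix (Idx m n) (Idx m n) ℝ)ˣ).val =
        ((Units.oneSub (t X) (htlt X))⁻¹).val * gammaInv m n c k Γ Ω g X.1 := by
      rw [hufdef]
      simp [mul_inv_rev, hγudef]
    rw [h1]
    refine (norm_mul_le _ _).trans ?_
    have h2 : ‖((Units.oneSub (t X) (htlt X))⁻¹).val‖ ≤ W := by
      have hser : ((Units.oneSub (t X) (htlt X))⁻¹).val = ∑' i : ℕ, (t X) ^ i := rfl
      rw [hser]
      refine (tsum_geometric_le_of_norm_lt_one (t X) (htlt X)).trans ?_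
      have h5 : (1:ℝ)/2 ≤ 1 - ‖t X‖ := by linarith [htnorm X]
      have h4 : (1 - ‖t X‖)⁻¹ ≤ ((1:ℝ)/2)⁻¹ := inv_anti₀ (by norm_num) h5
      have h4' : ((1:ℝ)/2)⁻¹ = (2:ℝ) := by norm_num
      rw [hWdef]
      linarith
    exact mul_le_mul h2 (hGinv X.1) (norm_nonneg _) (by linarith)
  -- derivative of the matrix-valued map
  set fst1 : ((Fin m → ℝ) × (Fin n → ℝ) × (Fin n → ℝ)) →L[ℝ] (Fin m → ℝ) :=
    ContinuousLinearMap.fst ℝ (Fin m → ℝ) ((Fin n → ℝ) × (Fin n → ℝ)) with hfst1def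
  set DA : ((Fin m → ℝ) × (Fin n → ℝ) × (Fin n → ℝ)) →
      (((Fin m → ℝ) × (Fin n → ℝ) × (Fin n → ℝ)) →L[ℝ] Matrix (Idx m n) (Idx m n) ℝ) :=
    fun X =>
      (∑ i : Fin m, ∑ j : Fin n,
        ((fderiv ℝ (g i j) X.1).comp fst1).smulRight (gmat m n c i j)) -
      ε • ∑ i : Fin m, ∑ j : Fin m,
        (((ContinuousLinearMap.apply ℝ ℝ (Pi.single j 1)).comp
          (fderiv ℝ (fderiv ℝ (f i)) X.1)).comp fst1).smulRight (kmat m n c i j) with hDAdef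
  have hA : ∀ X, HasFDerivAt
      (fun X : (Fin m → ℝ) × (Fin n → ℝ) × (Fin n → ℝ) =>
        gammaMat m n c k Γ Ω g X.1 - ε • kappaMat m n c f X.1) (DA X) X := by
    intro X
    have hγpart : HasFDerivAt
        (fun X : (Fin m → ℝ) × (Fin n → ℝ) × (Fin n → ℝ) => gammaMat m n c k Γ Ω g X.1)
        (∑ i : Fin m, ∑ j : Fin n,
          ((fderiv ℝ (g i j) X.1).comp fst1).smulRight (gmat m n c i j)) X := by
      have heq : (fun X : (Fin m → ℝ) × (Fin n → ℝ) × (Fin n → ℝ) =>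
          gammaMat m n c k Γ Ω g X.1) = fun X =>
          gammaConst m n c k Γ Ω + ∑ i : Fin m, ∑ j : Fin n, g i j X.1 • gmat m n c i j :=
        funext fun X => gammaMat_decomp m n c k Γ Ω g X.1
      rw [heq]
      exact
        (HasFDerivAt.fun_sum fun i _ => HasFDerivAt.fun_sum fun j _ =>
          (((hg_diff i j) X.1).hasFDerivAt.comp X hasFDerivAt_fst).smul_const _).const_add _
    have hκpart : HasFDerivAt
        (fun X : (Fin m → ℝ) × (Fin n → ℝ) × (Fin n → ℝ) => kappaMat m n c f X.1)
        (∑ i : Fin m, ∑ j : Fin m,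
          (((ContinuousLinearMap.apply ℝ ℝ (Pi.single j 1)).comp
            (fderiv ℝ (fderiv ℝ (f i)) X.1)).comp fst1).smulRight (kmat m n c i j)) X := by
      have heq : (fun X : (Fin m → ℝ) × (Fin n → ℝ) × (Fin n → ℝ) =>
          kappaMat m n c f X.1) = fun X =>
          ∑ i : Fin m, ∑ j : Fin m, fderiv ℝ (f i) X.1 (Pi.single j 1) • kmat m n c i j :=
        funext fun X => kappaMat_decomp m n c f X.1
      rw [heq]
      refine HasFDerivAt.fun_sum fun i _ => ?_
      refine HasFDerivAt.fun_sum fun j _ => ?_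
      refine HasFDerivAt.smul_const ?_ _
      exact ((ContinuousLinearMap.apply ℝ ℝ (Pi.single j 1)).hasFDerivAt.comp X.1
        ((hf_deriv_diff i) X.1).hasFDerivAt).comp X hasFDerivAt_fst
    exact hγpart.sub (hκpart.const_smul ε)
  have happly : ∀ j : Fin m, ‖(ContinuousLinearMap.apply ℝ ℝ (Pi.single j 1) :
      ((Fin m → ℝ) →L[ℝ] ℝ) →L[ℝ] ℝ)‖ ≤ 1 := by
    intro j
    refine ContinuousLinearMap.opNorm_le_bound _ zero_le_one fun L => ?_
    rw [ContinuousLinearMap.apply_apply, one_mul]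
    calc ‖L (Pi.single j 1)‖ ≤ ‖L‖ * ‖(Pi.single j 1 : Fin m → ℝ)‖ := L.le_opNorm _
      _ = ‖L‖ := by rw [Pi.norm_single, norm_one, mul_one]
  have hfstle : ‖fst1‖ ≤ 1 := by
    rw [hfst1def]
    exact ContinuousLinearMap.norm_fst_le ℝ (Fin m → ℝ) ((Fin n → ℝ) × (Fin n → ℝ))
  have hfstv : ∀ v : (Fin m → ℝ) × (Fin n → ℝ) × (Fin n → ℝ), ‖fst1 v‖ ≤ ‖v‖ := by
    intro v
    rw [hfst1def]
    exact norm_fst_le v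
  have hDAbound : ∀ X (v : (Fin m → ℝ) × (Fin n → ℝ) × (Fin n → ℝ)),
      ‖DA X v‖ ≤ D * ‖v‖ := by
    intro X v
    simp only [hDAdef, ContinuousLinearMap.sub_apply, ContinuousLinearMap.smul_apply,
      ContinuousLinearMap.sum_apply, ContinuousLinearMap.smulRight_apply,
      ContinuousLinearMap.comp_apply, ContinuousLinearMap.apply_apply]
    refine (norm_sub_le _ _).trans ?_
    rw [hDdef, add_mul]
    refine add_le_add ?_ ?_
    · refine (norm_sum_le _ _).trans ?_
      rw [Finset.sum_mul]
      refine Finset.sum_le_sum fun i _ => ?_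
      refine (norm_sum_le _ _).trans ?_
      rw [Finset.sum_mul]
      refine Finset.sum_le_sum fun j _ => ?_
      rw [norm_smul, Real.norm_eq_abs]
      have hc : |fderiv ℝ (g i j) X.1 (fst1 v)| ≤ Bg' * ‖v‖ := by
        calc |fderiv ℝ (g i j) X.1 (fst1 v)| = ‖fderiv ℝ (g i j) X.1 (fst1 v)‖ :=
              (Real.norm_eq_abs _).symm
          _ ≤ ‖fderiv ℝ (g i j) X.1‖ * ‖fst1 v‖ := ContinuousLinearMap.le_opNorm _ _
          _ ≤ Bg' * ‖v‖ := mul_le_mul (hBg' i j X.1) (hfstv v) (norm_nonneg _) hBg'0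
      calc |fderiv ℝ (g i j) X.1 (fst1 v)| * ‖gmat m n c i j‖
          ≤ (Bg' * ‖v‖) * ‖gmat m n c i j‖ := mul_le_mul_of_nonneg_right hc (norm_nonneg _)
        _ = Bg' * ‖gmat m n c i j‖ * ‖v‖ := by ring
    · rw [norm_smul, Real.norm_eq_abs, abs_of_nonneg hε0]
      have hS : ‖∑ i : Fin m, ∑ j : Fin m,
          fderiv ℝ (fderiv ℝ (f i)) X.1 (fst1 v) (Pi.single j 1) • kmat m n c i j‖ ≤
          (∑ i : Fin m, ∑ j : Fin m, Bf'' * ‖kmat m n c i j‖) * ‖v‖ := by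
        refine (norm_sum_le _ _).trans ?_
        rw [Finset.sum_mul]
        refine Finset.sum_le_sum fun i _ => ?_
        refine (norm_sum_le _ _).trans ?_
        rw [Finset.sum_mul]
        refine Finset.sum_le_sum fun j _ => ?_
        rw [norm_smul, Real.norm_eq_abs]
        have hc : |fderiv ℝ (fderiv ℝ (f i)) X.1 (fst1 v) (Pi.single j 1)| ≤ Bf'' * ‖v‖ := by
          calc |fderiv ℝ (fderiv ℝ (f i)) X.1 (fst1 v) (Pi.single j 1)|
              = ‖fderiv ℝ (fderiv ℝ (f i)) X.1 (fst1 v) (Pi.single j 1)‖ :=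
                (Real.norm_eq_abs _).symm
            _ ≤ ‖fderiv ℝ (fderiv ℝ (f i)) X.1 (fst1 v)‖ * ‖(Pi.single j 1 : Fin m → ℝ)‖ :=
                ContinuousLinearMap.le_opNorm _ _
            _ = ‖fderiv ℝ (fderiv ℝ (f i)) X.1 (fst1 v)‖ := by
                rw [Pi.norm_single, norm_one, mul_one]
            _ ≤ ‖fderiv ℝ (fderiv ℝ (f i)) X.1‖ * ‖fst1 v‖ :=
                ContinuousLinearMap.le_opNorm _ _
            _ ≤ Bf'' * ‖v‖ := mul_le_mul (hBf'' i X.1) (hfstv v) (norm_nonneg _) hBf''0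
        calc |fderiv ℝ (fderiv ℝ (f i)) X.1 (fst1 v) (Pi.single j 1)| * ‖kmat m n c i j‖
            ≤ (Bf'' * ‖v‖) * ‖kmat m n c i j‖ := mul_le_mul_of_nonneg_right hc (norm_nonneg _)
          _ = Bf'' * ‖kmat m n c i j‖ * ‖v‖ := by ring
      calc ε * ‖∑ i : Fin m, ∑ j : Fin m,
            fderiv ℝ (fderiv ℝ (f i)) X.1 (fst1 v) (Pi.single j 1) • kmat m n c i j‖
          ≤ 1 * ((∑ i : Fin m, ∑ j : Fin m, Bf'' * ‖kmat m n c i j‖) * ‖v‖) :=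
            mul_le_mul hεle1 hS (norm_nonneg _) zero_le_one
        _ = (∑ i : Fin m, ∑ j : Fin m, Bf'' * ‖kmat m n c i j‖) * ‖v‖ := one_mul _
  have hcoord : ∀ l : Idx m n, ‖coordVec m n l‖ ≤ 1 := by
    intro l
    rcases l with i | l
    · simp [coordVec, Prod.norm_def, Pi.norm_single]
    · rcases l with j | j <;> simp [coordVec, Prod.norm_def, Pi.norm_single]
  have hfun : (fun X : (Fin m → ℝ) × (Fin n → ℝ) × (Fin n → ℝ) =>
      (gammaMat m n c k Γ Ω g X.1 - ε • kappaMat m n c f X.1)⁻¹) =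
      fun X : (Fin m → ℝ) × (Fin n → ℝ) × (Fin n → ℝ) =>
        Ring.inverse (gammaMat m n c k Γ Ω g X.1 - ε • kappaMat m n c f X.1) :=
    funext fun X => Matrix.nonsing_inv_eq_ringInverse _
  have hIsUnit : ∀ X : (Fin m → ℝ) × (Fin n → ℝ) × (Fin n → ℝ),
      IsUnit (gammaMat m n c k Γ Ω g X.1 - ε • kappaMat m n c f X.1) :=
    fun X => ⟨uf X, hval X⟩
  constructor
  · rw [hfun]
    intro X
    exact DifferentiableAt.inverse ((hA X).differentiableAt) (hIsUnit X)
  · intro X l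
    rw [hfun]
    have hfd : fderiv ℝ (fun X : (Fin m → ℝ) × (Fin n → ℝ) × (Fin n → ℝ) =>
        Ring.inverse (gammaMat m n c k Γ Ω g X.1 - ε • kappaMat m n c f X.1)) X =
        (fderiv ℝ (Ring.inverse : Matrix (Idx m n) (Idx m n) ℝ → _)
          (gammaMat m n c k Γ Ω g X.1 - ε • kappaMat m n c f X.1)).comp (DA X) := by
      have h := fderiv_comp (𝕜 := ℝ) X (differentiableAt_inverse (hIsUnit X))
        ((hA X).differentiableAt)
      rw [(hA X).fderiv] at h
      exact h
    rw [hfd]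
    have hinv' : fderiv ℝ (Ring.inverse : Matrix (Idx m n) (Idx m n) ℝ → _)
        (gammaMat m n c k Γ Ω g X.1 - ε • kappaMat m n c f X.1) =
        -(ContinuousLinearMap.mulLeftRight ℝ _ ((uf X)⁻¹).val ((uf X)⁻¹).val) := by
      rw [← hval X]
      exact fderiv_inverse (uf X)
    rw [hinv']
    have hb : ‖((-(ContinuousLinearMap.mulLeftRight ℝ _ ((uf X)⁻¹).val
        ((uf X)⁻¹).val)).comp (DA X)) (coordVec m n l)‖ ≤ W * G * (W * G) * (D * 1) := by
      rw [ContinuousLinearMap.comp_apply, ContinuousLinearMap.neg_apply, norm_neg]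
      have h1 := huinv_norm X
      have hG2 : (0:ℝ) ≤ W * G := mul_nonneg (by linarith) hG0
      have h4 : ‖DA X (coordVec m n l)‖ ≤ D * 1 :=
        (hDAbound X (coordVec m n l)).trans (mul_le_mul_of_nonneg_left (hcoord l) hD0)
      calc ‖ContinuousLinearMap.mulLeftRight ℝ _ ((uf X)⁻¹).val ((uf X)⁻¹).val
            (DA X (coordVec m n l))‖
          ≤ (‖((uf X)⁻¹).val‖ * ‖((uf X)⁻¹).val‖) * ‖DA X (coordVec m n l)‖ :=
            ContinuousLinearMap.le_of_opNorm_le _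
              (ContinuousLinearMap.opNorm_mulLeftRight_apply_apply_le ℝ _ _ _) _
        _ ≤ W * G * (W * G) * (D * 1) :=
            mul_le_mul (mul_le_mul h1 h1 (norm_nonneg _) hG2) h4 (norm_nonneg _)
              (mul_nonneg hG2 hG2)
    refine lt_of_le_of_lt hb ?_
    have : W * G * (W * G) * (D * 1) = (W * G) ^ 2 * D := by ring
    rw [this]
    linarith
end
end

section
/- For every X ∈ ℝ^m × ℝ^n × ℝ^n, the characteristic polynomial of γ(X) equals ∏_{i=1}^m (λ − 1/c_i) · ∏_{j=1}^n (λ² − (Γ²/(k_j Ω²)) λ + Γ²/(k_j² Ω²)). In particular, the eigenvalues of γ(X) are 1/c_i (i = 1, …, m) and (Γ²/(2 k_j Ω²))(1 ± √(1 − 4Ω²/Γ²)) (j = 1, …, n), and they do not depend on X. -/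
open scoped Matrix.Norms.L2Operator

noncomputable section

open Polynomial Matrix

lemma charmatrix_blockDiagonal' {R o p : Type*} [CommRing R] [DecidableEq o] [Fintype o]
    [DecidableEq p] [Fintype p] (M : o → Matrix p p R) :
    charmatrix (blockDiagonal M) = blockDiagonal (fun j => charmatrix (M j)) := by
  ext ⟨i, a⟩ ⟨j, b⟩
  by_cases hab : a = b
  · subst hab
    by_cases hij : i = j
    · subst hij; simp [blockDiagonal_apply]
    · simp [charmatrix_apply, blockDiagonal_apply, diagonal_apply, hij, Prod.ext_iff]
  · simp [charmatrix_apply, blockDiagonal_apply, diagonal_apply, hab, Prod.ext_iff,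
      fun h : (i,a) = (j,b) => hab (congrArg Prod.snd h)]

lemma charpoly_blockDiagonal' {R o p : Type*} [CommRing R] [DecidableEq o] [Fintype o]
    [DecidableEq p] [Fintype p] (M : o → Matrix p p R) :
    (blockDiagonal M).charpoly = ∏ j, (M j).charpoly := by
  rw [Matrix.charpoly, charmatrix_blockDiagonal', det_blockDiagonal]
  rfl

lemma charpoly_diagonal' {R p : Type*} [CommRing R] [DecidableEq p] [Fintype p] (d : p → R) :
    (diagonal d).charpoly = ∏ i, (X - C (d i)) := by
  have : charmatrix (diagonal d) = diagonal (fun i => (X : R[X]) - C (d i)) := by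
    ext i j
    by_cases h : i = j
    · subst h; simp
    · simp [charmatrix_apply, diagonal_apply, h]
  rw [Matrix.charpoly, this, det_diagonal]

lemma charpoly_fin_two' {R : Type*} [CommRing R] (a b c d : R) :
    (!![a, b; c, d]).charpoly = X ^ 2 - C (a + d) * X + C (a * d - b * c) := by
  rw [Matrix.charpoly, Matrix.det_fin_two]
  simp [charmatrix_apply, diagonal_apply]
  ring

set_option maxHeartbeats 2000000 in
theorem statement3 (m n : ℕ) (hm : 0 < m) (hn : 0 < n)
    (c : Fin m → ℝ) (hc : ∀ i, 0 < c i) (k : Fin n → ℝ) (hk : ∀ j, 0 < k j)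
    (Γ Ω : ℝ) (hΓ : 0 < Γ) (hΩ : 0 < Ω)
    (g : Fin m → Fin n → (Fin m → ℝ) → ℝ)
    (hg_diff : ∀ i j, Differentiable ℝ (g i j))
    (hg_deriv_cont : ∀ i j, Continuous (fderiv ℝ (g i j)))
    (hg_bdd : ∀ i j, ∃ C, ∀ y, |g i j y| ≤ C)
    (hg_deriv_bdd : ∀ i j, ∃ C, ∀ y, ‖fderiv ℝ (g i j) y‖ ≤ C) :
    ∀ X : (Fin m → ℝ) × (Fin n → ℝ) × (Fin n → ℝ),
      (gammaMat m n c k Γ Ω g X.1).charpoly =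
          (∏ i : Fin m, (Polynomial.X - Polynomial.C (1 / c i))) *
            ∏ j : Fin n,
              (Polynomial.X ^ 2 - Polynomial.C (Γ ^ 2 / (k j * Ω ^ 2)) * Polynomial.X +
                Polynomial.C (Γ ^ 2 / (k j ^ 2 * Ω ^ 2))) ∧
      ∀ lam : ℂ,
        (((gammaMat m n c k Γ Ω g X.1).charpoly).map (algebraMap ℝ ℂ)).IsRoot lam ↔
          ((∃ i, lam = 1 / ((c i : ℝ) : ℂ)) ∨
            ∃ j,
              lam = ((Γ ^ 2 / (2 * k j * Ω ^ 2) : ℝ) : ℂ) *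
                  (1 + ((1 - 4 * Ω ^ 2 / Γ ^ 2 : ℝ) : ℂ) ^ (1 / 2 : ℂ)) ∨
              lam = ((Γ ^ 2 / (2 * k j * Ω ^ 2) : ℝ) : ℂ) *
                  (1 - ((1 - 4 * Ω ^ 2 / Γ ^ 2 : ℝ) : ℂ) ^ (1 / 2 : ℂ))) := by
  have hΓ0 : Γ ≠ 0 := ne_of_gt hΓ
  have hΩ0 : Ω ≠ 0 := ne_of_gt hΩ
  have hk0 : ∀ j, k j ≠ 0 := fun j => ne_of_gt (hk j)
  intro X
  obtain ⟨y, -, -⟩ := X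
  -- the blocks
  set A : Matrix (Fin m) (Fin m) ℝ := diagonal (fun i => 1 / c i) with hA
  set Bm : Matrix (Fin m) (Fin n ⊕ Fin n) ℝ :=
    Matrix.of (fun i j => Sum.elim (fun j' => -(g i j' y / c i)) (fun _ => (0:ℝ)) j) with hBm
  set Dm : Matrix (Fin n ⊕ Fin n) (Fin n ⊕ Fin n) ℝ :=
    fromBlocks 0 (diagonal fun i => -(Γ / Ω ^ 2) * (1 / k i))
      (diagonal fun i => Γ * (1 / k i)) (diagonal fun i => (Γ ^ 2 / Ω ^ 2) * (1 / k i)) with hDm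
  have hblocks : gammaMat m n c k Γ Ω g y = fromBlocks A Bm 0 Dm := by
    ext i j
    rcases i with i | i | i <;> rcases j with j | j | j <;> rfl
  set blk : Fin n → Matrix (Fin 2) (Fin 2) ℝ := fun j =>
    !![0, -(Γ / Ω ^ 2) * (1 / k j); Γ * (1 / k j), (Γ ^ 2 / Ω ^ 2) * (1 / k j)] with hblk
  let e : (Fin n ⊕ Fin n) ≃ (Fin 2 × Fin n) :=
    ⟨Sum.elim (fun j => (0, j)) (fun j => (1, j)),
     fun p => ![Sum.inl p.2, Sum.inr p.2] p.1,
     by rintro (j | j) <;> rfl,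
     by rintro ⟨a, j⟩; fin_cases a <;> rfl⟩
  have hre : reindex e e Dm = blockDiagonal blk := by
    ext ⟨a, j⟩ ⟨b, j'⟩
    fin_cases a <;> fin_cases b <;>
      simp [hDm, hblk, blockDiagonal_apply, fromBlocks, diagonal_apply, e] <;>
      by_cases h : j = j' <;> simp [h]
  have hDcp : Dm.charpoly = ∏ j : Fin n,
      (X ^ 2 - C (Γ ^ 2 / (k j * Ω ^ 2)) * X + C (Γ ^ 2 / (k j ^ 2 * Ω ^ 2))) := by
    rw [← charpoly_reindex e Dm, hre, charpoly_blockDiagonal']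
    refine Finset.prod_congr rfl fun j _ => ?_
    rw [hblk, charpoly_fin_two']
    congr 2
    · congr 1
      field_simp
      ring
    · field_simp
      ring
  have hcp : (gammaMat m n c k Γ Ω g y).charpoly =
      (∏ i : Fin m, (X - C (1 / c i))) *
        ∏ j : Fin n,
          (X ^ 2 - C (Γ ^ 2 / (k j * Ω ^ 2)) * X + C (Γ ^ 2 / (k j ^ 2 * Ω ^ 2))) := by
    rw [hblocks, charpoly_fromBlocks_zero₂₁, hA, charpoly_diagonal', hDcp]
  refine ⟨hcp, fun lam => ?_⟩
  -- complex roots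
  set s : ℂ := ((1 - 4 * Ω ^ 2 / Γ ^ 2 : ℝ) : ℂ) ^ (1 / 2 : ℂ) with hs
  have hs2 : s ^ 2 = ((1 - 4 * Ω ^ 2 / Γ ^ 2 : ℝ) : ℂ) := by
    rw [hs, one_div]
    exact Complex.cpow_ofNat_inv_pow _ 2
  have hfac : ∀ j : Fin n,
      ((X : ℂ[X]) ^ 2 - C ((Γ ^ 2 / (k j * Ω ^ 2) : ℝ) : ℂ) * X +
        C ((Γ ^ 2 / (k j ^ 2 * Ω ^ 2) : ℝ) : ℂ)) =
      (X - C (((Γ ^ 2 / (2 * k j * Ω ^ 2) : ℝ) : ℂ) * (1 + s))) *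
        (X - C (((Γ ^ 2 / (2 * k j * Ω ^ 2) : ℝ) : ℂ) * (1 - s))) := by
    intro j
    set a : ℂ := ((Γ ^ 2 / (2 * k j * Ω ^ 2) : ℝ) : ℂ) with ha
    have hb : (Γ ^ 2 / (k j * Ω ^ 2) : ℝ) = 2 * (Γ ^ 2 / (2 * k j * Ω ^ 2)) := by
      rw [mul_div_assoc', div_eq_div_iff (mul_ne_zero (hk0 j) (pow_ne_zero 2 hΩ0)) (mul_ne_zero (mul_ne_zero two_ne_zero (hk0 j)) (pow_ne_zero 2 hΩ0))]
      ring
    have h1 : ((Γ ^ 2 / (k j * Ω ^ 2) : ℝ) : ℂ) = a * (1 + s) + a * (1 - s) := by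
      rw [hb, ha]
      push_cast
      ring
    have h2 : ((Γ ^ 2 / (k j ^ 2 * Ω ^ 2) : ℝ) : ℂ) = (a * (1 + s)) * (a * (1 - s)) := by
      have hone : (1 : ℂ) - ((1 - 4 * Ω ^ 2 / Γ ^ 2 : ℝ) : ℂ) = ((4 * Ω ^ 2 / Γ ^ 2 : ℝ) : ℂ) := by
        push_cast
        ring
      have hsq : (a * (1 + s)) * (a * (1 - s)) = a ^ 2 * (1 - s ^ 2) := by ring
      rw [hsq, hs2, hone, ha, ← Complex.ofReal_pow, ← Complex.ofReal_mul]
      norm_cast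
      field_simp [hΓ0, hΩ0, hk0 j]
      ring
    rw [h1, h2]
    simp only [_root_.map_add, _root_.map_mul]
    ring
  rw [hcp]
  rw [Polynomial.IsRoot]
  simp only [Polynomial.map_mul, Polynomial.map_prod, Polynomial.map_add, Polynomial.map_sub,
    Polynomial.map_pow, Polynomial.map_X, Polynomial.map_C]
  have halg : ∀ x : ℝ, algebraMap ℝ ℂ x = (x : ℂ) := fun x => rfl
  simp only [halg]
  rw [show (∏ j : Fin n, ((X : ℂ[X]) ^ 2 - C ((Γ ^ 2 / (k j * Ω ^ 2) : ℝ) : ℂ) * X +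
        C ((Γ ^ 2 / (k j ^ 2 * Ω ^ 2) : ℝ) : ℂ))) =
      ∏ j : Fin n, ((X - C (((Γ ^ 2 / (2 * k j * Ω ^ 2) : ℝ) : ℂ) * (1 + s))) * (X - C (((Γ ^ 2 / (2 * k j * Ω ^ 2) : ℝ) : ℂ) * (1 - s)))) from
    Finset.prod_congr rfl fun j _ => hfac j]
  simp only [Polynomial.eval_mul, Polynomial.eval_prod, Polynomial.eval_sub, Polynomial.eval_X,
    Polynomial.eval_C, Polynomial.eval_mul]
  rw [mul_eq_zero, Finset.prod_eq_zero_iff, Finset.prod_eq_zero_iff]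
  simp only [Finset.mem_univ, true_and, mul_eq_zero, sub_eq_zero]
  constructor
  · rintro (⟨i, hi⟩ | ⟨j, hj | hj⟩)
    · exact Or.inl ⟨i, by rw [hi]; push_cast; ring⟩
    · exact Or.inr ⟨j, Or.inl hj⟩
    · exact Or.inr ⟨j, Or.inr hj⟩
  · rintro (⟨i, hi⟩ | ⟨j, hj | hj⟩)
    · exact Or.inl ⟨i, by rw [hi]; push_cast; ring⟩
    · exact Or.inr ⟨j, Or.inl hj⟩
    · exact Or.inr ⟨j, Or.inr hj⟩
end
end

section
/- For every X ∈ ℝ^m × ℝ^n × ℝ^n, every complex eigenvalue λ of γ(X) (i.e., every complex root of its characteristic polynomial) satisfies Re λ > 0. -/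
open scoped Matrix.Norms.L2Operator

noncomputable section

lemma eval_charpoly' {ι : Type*} [Fintype ι] [DecidableEq ι] (N : Matrix ι ι ℂ) (lam : ℂ) :
    N.charpoly.eval lam = (Matrix.diagonal (fun _ => lam) - N).det := by
  rw [Matrix.charpoly, ← Polynomial.coe_evalRingHom, RingHom.map_det]
  congr 1
  ext i j
  by_cases h : i = j <;>
    simp [Matrix.charmatrix_apply, h, Matrix.diagonal_apply, Matrix.sub_apply]

lemma quad_re_pos (T D : ℝ) (hT : 0 < T) (hD : 0 < D) (lam : ℂ)
    (h : lam ^ 2 - (T : ℂ) * lam + (D : ℂ) = 0) : 0 < lam.re := by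
  have hre := congrArg Complex.re h
  have him := congrArg Complex.im h
  simp [pow_two, Complex.mul_re, Complex.mul_im, Complex.ofReal_re, Complex.ofReal_im] at hre him
  set x := lam.re; set y := lam.im
  by_contra hx
  push_neg at hx
  rcases eq_or_ne y 0 with hy | hy
  · rw [hy] at hre; nlinarith
  · have h1 : x * y + y * x - T * y = 0 := by linarith
    have hx2 : x = T / 2 := by
      have h2 : y * (2 * x - T) = 0 := by ring_nf; ring_nf at h1; linarith
      rcases mul_eq_zero.1 h2 with h | h
      · exact absurd h hy
      · linarith
    nlinarith

theorem statement4 (m n : ℕ) (hm : 0 < m) (hn : 0 < n)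
    (c : Fin m → ℝ) (hc : ∀ i, 0 < c i) (k : Fin n → ℝ) (hk : ∀ j, 0 < k j)
    (Γ Ω : ℝ) (hΓ : 0 < Γ) (hΩ : 0 < Ω)
    (g : Fin m → Fin n → (Fin m → ℝ) → ℝ)
    (hg_diff : ∀ i j, Differentiable ℝ (g i j))
    (hg_deriv_cont : ∀ i j, Continuous (fderiv ℝ (g i j)))
    (hg_bdd : ∀ i j, ∃ C, ∀ y, |g i j y| ≤ C)
    (hg_deriv_bdd : ∀ i j, ∃ C, ∀ y, ‖fderiv ℝ (g i j) y‖ ≤ C) :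
    ∀ X : (Fin m → ℝ) × (Fin n → ℝ) × (Fin n → ℝ), ∀ lam : ℂ,
      (((gammaMat m n c k Γ Ω g X.1).charpoly).map (algebraMap ℝ ℂ)).IsRoot lam →
        0 < lam.re := by
  intro X lam hroot
  set M : Matrix (Idx m n) (Idx m n) ℝ := gammaMat m n c k Γ Ω g X.1 with hM
  set N : Matrix (Idx m n) (Idx m n) ℂ := M.map (algebraMap ℝ ℂ) with hN
  have hch : N.charpoly = M.charpoly.map (algebraMap ℝ ℂ) := Matrix.charpoly_map M _
  have hdet : (Matrix.diagonal (fun _ : Idx m n => lam) - N).det = 0 := by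
    rw [← eval_charpoly', hch]
    exact hroot
  obtain ⟨v, hv0, hveq⟩ := Matrix.exists_mulVec_eq_zero_iff.2 hdet
  have key : ∀ i, (∑ j, N i j * v j) = lam * v i := by
    intro i
    have h := congrFun hveq i
    simp only [Matrix.mulVec, dotProduct, Matrix.sub_apply, Matrix.diagonal_apply,
      Pi.zero_apply, sub_mul, Finset.sum_sub_distrib, ite_mul, zero_mul, Finset.sum_ite_eq,
      Finset.mem_univ, if_true, sub_eq_zero] at h
    exact h.symm
  -- row equations
  have eqB : ∀ j : Fin n, ((-(Γ / Ω ^ 2) * (1 / k j) : ℝ) : ℂ) * v (.inr (.inr j))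
      = lam * v (.inr (.inl j)) := by
    intro j
    rw [← key (.inr (.inl j))]
    simp only [hN, hM, gammaMat, Matrix.map_apply, Matrix.of_apply, Fintype.sum_sum_type,
      Complex.coe_algebraMap, apply_ite ((↑) : ℝ → ℂ), Complex.ofReal_zero, ite_mul, zero_mul,
      Finset.sum_ite_eq, Finset.mem_univ, if_true, Finset.sum_const_zero, add_zero, zero_add]
  have eqC : ∀ j : Fin n, ((Γ * (1 / k j) : ℝ) : ℂ) * v (.inr (.inl j))
      + (((Γ ^ 2 / Ω ^ 2) * (1 / k j) : ℝ) : ℂ) * v (.inr (.inr j))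
      = lam * v (.inr (.inr j)) := by
    intro j
    rw [← key (.inr (.inr j))]
    simp only [hN, hM, gammaMat, Matrix.map_apply, Matrix.of_apply, Fintype.sum_sum_type,
      Complex.coe_algebraMap, apply_ite ((↑) : ℝ → ℂ), Complex.ofReal_zero, ite_mul, zero_mul,
      Finset.sum_ite_eq, Finset.mem_univ, if_true, Finset.sum_const_zero, add_zero, zero_add]
  by_cases hbc : ∀ j : Fin n, v (.inr (.inl j)) = 0 ∧ v (.inr (.inr j)) = 0
  · -- eigenvector supported on first block: lam = 1/c i
    have hex : ∃ i : Fin m, v (.inl i) ≠ 0 := by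
      by_contra hno
      push_neg at hno
      apply hv0
      funext p
      cases p with
      | inl i => exact hno i
      | inr q =>
        cases q with
        | inl j => exact (hbc j).1
        | inr j => exact (hbc j).2
    obtain ⟨i, hi⟩ := hex
    have h := key (.inl i)
    have hsum : (∑ p, N (.inl i) p * v p) = ((1 / c i : ℝ) : ℂ) * v (.inl i) := by
      rw [Fintype.sum_sum_type]
      have e1 : (∑ p : Fin n ⊕ Fin n, N (.inl i) (.inr p) * v (.inr p)) = 0 := by
        rw [Fintype.sum_sum_type,
          Finset.sum_eq_zero (fun j _ => by rw [(hbc j).1, mul_zero]),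
          Finset.sum_eq_zero (fun j _ => by rw [(hbc j).2, mul_zero]), add_zero]
      rw [e1, add_zero]
      simp only [hN, hM, gammaMat, Matrix.map_apply, Matrix.of_apply, Complex.coe_algebraMap,
        apply_ite ((↑) : ℝ → ℂ), Complex.ofReal_zero, ite_mul, zero_mul,
        Finset.sum_ite_eq, Finset.mem_univ, if_true]
    rw [hsum] at h
    have hlam := mul_right_cancel₀ hi h
    rw [← hlam]
    simp only [Complex.ofReal_re]
    have := hc i
    positivity
  · push_neg at hbc
    obtain ⟨j, hj⟩ := hbc
    set b := v (.inr (.inl j)) with hb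
    set cc := v (.inr (.inr j)) with hcc
    have hB := eqB j
    have hC := eqC j
    rw [← hb, ← hcc] at hB hC
    rcases eq_or_ne cc 0 with h0 | h0
    · -- cc = 0 forces b = 0, contradiction
      exfalso
      rw [h0] at hB hC
      simp only [mul_zero, add_zero] at hB hC
      have hb0 : b = 0 := by
        have hα : ((Γ * (1 / k j) : ℝ) : ℂ) ≠ 0 := by
          simp only [ne_eq, Complex.ofReal_eq_zero]
          have := hk j
          positivity
        exact (mul_eq_zero.1 hC).resolve_left hα
      exact hj hb0 h0
    · -- quadratic case
      have hquad : (lam ^ 2 - ((Γ ^ 2 / Ω ^ 2 * (1 / k j) : ℝ) : ℂ) * lam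
          + (((Γ * (1 / k j)) * (Γ / Ω ^ 2 * (1 / k j)) : ℝ) : ℂ)) * cc = 0 := by
        have h1 : ((Γ * (1 / k j) : ℝ) : ℂ) * (lam * b)
            + (((Γ ^ 2 / Ω ^ 2) * (1 / k j) : ℝ) : ℂ) * (lam * cc) = lam * (lam * cc) := by
          linear_combination lam * hC
        rw [← hB] at h1
        push_cast at h1 ⊢
        linear_combination -h1
      have hq : lam ^ 2 - ((Γ ^ 2 / Ω ^ 2 * (1 / k j) : ℝ) : ℂ) * lam
          + (((Γ * (1 / k j)) * (Γ / Ω ^ 2 * (1 / k j)) : ℝ) : ℂ) = 0 :=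
        (mul_eq_zero.1 hquad).resolve_right h0
      have hkj := hk j
      exact quad_re_pos _ _ (by positivity) (by positivity) lam hq

end
end

section
/- There exist constants C > 0 and C_d > 0 (depending only on n, k_1, …, k_n, Γ, Ω) such that for every real s ≥ 0, ‖exp(−s A)‖ ≤ C e^{−C_d s}, where exp denotes the matrix exponential. Consequently, for every ε > 0 and all 0 ≤ t₀ ≤ t, the fundamental solution Φ_{t₀}(t) = exp(−((t−t₀)/ε) A) of the system Φ' = −(1/ε) A Φ with Φ_{t₀}(t₀) = I satisfies ‖Φ_{t₀}(t)‖ ≤ C exp(−C_d (t−t₀)/ε). -/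
open scoped Matrix.Norms.L2Operator
open NormedSpace

noncomputable section

variable {ι : Type*} [Fintype ι] [DecidableEq ι]

/-- `M ↦ (M *ᵥ x) i` as a continuous linear map. -/
def entryCLM (x : ι → ℝ) (i : ι) : Matrix ι ι ℝ →L[ℝ] ℝ :=
  LinearMap.toContinuousLinearMap
    { toFun := fun M => M.mulVec x i
      map_add' := by intros; simp [Matrix.add_mulVec]
      map_smul' := by intros; simp [Matrix.smul_mulVec] }

lemma hasDerivAt_expVec (B : Matrix ι ι ℝ) (x : ι → ℝ) (i : ι) (s : ℝ) :
    HasDerivAt (fun t : ℝ => (exp (t • B)).mulVec x i)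
      (B.mulVec ((exp (s • B)).mulVec x) i) s := by
  have h := (entryCLM x i).hasFDerivAt.comp_hasDerivAt s (hasDerivAt_exp_smul_const' B s)
  simpa [entryCLM, Matrix.mulVec_mulVec, Function.comp_def] using h

/-- The `2n × 2n` block matrix `A = [[0, −(Γ/Ω²) D²], [Γ D², (Γ²/Ω²) D²]]`,
where `D²` is the diagonal matrix with entries `1/k_j`. -/
def Amat (n : ℕ) (k : Fin n → ℝ) (Γ Ω : ℝ) : Matrix (Fin n ⊕ Fin n) (Fin n ⊕ Fin n) ℝ :=
  Matrix.fromBlocks 0 ((-(Γ / Ω ^ 2)) • Matrix.diagonal fun j => 1 / k j)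
    (Γ • Matrix.diagonal fun j => 1 / k j) ((Γ ^ 2 / Ω ^ 2) • Matrix.diagonal fun j => 1 / k j)

lemma Amat_mulVec_inl (n : ℕ) (k : Fin n → ℝ) (Γ Ω : ℝ) (y : Fin n ⊕ Fin n → ℝ) (j : Fin n) :
    (Amat n k Γ Ω).mulVec y (Sum.inl j) = -(Γ / Ω ^ 2) * (1 / k j) * y (Sum.inr j) := by
  simp [Amat, Matrix.mulVec, dotProduct, Fintype.sum_sum_type, Matrix.diagonal,
    mul_comm, mul_assoc, Finset.mul_sum]

lemma Amat_mulVec_inr (n : ℕ) (k : Fin n → ℝ) (Γ Ω : ℝ) (y : Fin n ⊕ Fin n → ℝ) (j : Fin n) :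
    (Amat n k Γ Ω).mulVec y (Sum.inr j) =
      Γ * (1 / k j) * y (Sum.inl j) + (Γ ^ 2 / Ω ^ 2) * (1 / k j) * y (Sum.inr j) := by
  simp [Amat, Matrix.mulVec, dotProduct, Fintype.sum_sum_type, Matrix.diagonal,
    mul_comm, mul_assoc, Finset.mul_sum]

set_option maxHeartbeats 2000000 in
lemma key (n : ℕ) (hn : 0 < n) (k : Fin n → ℝ) (hk : ∀ j, 0 < k j)
    (Γ Ω : ℝ) (hΓ : 0 < Γ) (hΩ : 0 < Ω) :
    ∃ C > (0:ℝ), ∃ Cd > (0:ℝ), ∀ s : ℝ, 0 ≤ s →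
      ‖exp (-(s • Amat n k Γ Ω))‖ ≤ C * Real.exp (-(Cd * s)) := by
  have hne : Nonempty (Fin n) := ⟨⟨0, hn⟩⟩
  set a : ℝ := Γ / Ω ^ 2 with ha_def
  set b : ℝ := Γ with hb_def
  set c : ℝ := Γ ^ 2 / Ω ^ 2 with hc_def
  have ha : 0 < a := by positivity
  have hb : 0 < b := hΓ
  have hc : 0 < c := by positivity
  have hab : a * b = c := by rw [ha_def, hb_def, hc_def]; ring
  set p : ℝ := (2 + c) / a with hp_def
  set r : ℝ := 2 * a / c with hr_def
  have hp : 0 < p := by positivity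
  have hr : 0 < r := by positivity
  have hpa : p * a = 2 + c := by rw [hp_def]; field_simp
  have hrc : r * c = 2 * a := by rw [hr_def]; field_simp
  have hrb : r * b = 2 := by
    rw [hr_def]; rw [div_mul_eq_mul_div, div_eq_iff hc.ne']; linarith [hab]
  set L : ℝ := max p r + 1 with hL_def
  have hL : 0 < L := by positivity
  have hbp : b < p := by
    rw [hp_def, lt_div_iff₀ ha]; nlinarith [hab]
  set μ : ℝ := min (p - b) (r / 2) with hμ_def
  have hμ : 0 < μ := lt_min (by linarith) (by linarith)
  -- quadratic form bounds
  have quad_low : ∀ u v : ℝ, μ * (u ^ 2 + v ^ 2) ≤ p * u ^ 2 + 2 * (u * v) + r * v ^ 2 := by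
    intro u v
    have hcore : b * u ^ 2 + 2 * (u * v) + (r / 2) * v ^ 2 = (2 * u + r * v) ^ 2 / (2 * r) := by
      rw [eq_div_iff (by positivity)]; linear_combination (2 * u ^ 2) * hrb
    have h1 : μ ≤ p - b := min_le_left _ _
    have h2 : μ ≤ r / 2 := min_le_right _ _
    nlinarith [div_nonneg (sq_nonneg (2 * u + r * v)) (by positivity : (0:ℝ) ≤ 2 * r),
      sq_nonneg u, sq_nonneg v]
  have quad_up : ∀ u v : ℝ, p * u ^ 2 + 2 * (u * v) + r * v ^ 2 ≤ L * (u ^ 2 + v ^ 2) := by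
    intro u v
    have h1 : p ≤ max p r := le_max_left _ _
    have h2 : r ≤ max p r := le_max_right _ _
    nlinarith [sq_nonneg (u - v), sq_nonneg u, sq_nonneg v]
  -- uniform bound on k
  set K : ℝ := Finset.univ.sup' Finset.univ_nonempty k with hK_def
  have hkK : ∀ j, k j ≤ K := fun j => Finset.le_sup' k (Finset.mem_univ j)
  have hK : 0 < K := lt_of_lt_of_le (hk ⟨0, hn⟩) (hkK _)
  set m : ℝ := min a b with hm_def
  have hm : 0 < m := lt_min ha hb
  set c₀ : ℝ := m / (K * L) with hc₀_def
  have hc₀ : 0 < c₀ := by positivity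
  set B : Matrix (Fin n ⊕ Fin n) (Fin n ⊕ Fin n) ℝ := -(Amat n k Γ Ω) with hB_def
  -- main vector estimate
  have main : ∀ x : Fin n ⊕ Fin n → ℝ, ∀ s : ℝ, 0 ≤ s →
      (∑ j, (((exp (s • B)).mulVec x (Sum.inl j)) ^ 2 +
        ((exp (s • B)).mulVec x (Sum.inr j)) ^ 2)) ≤
      L / μ * Real.exp (-(2 * c₀ * s)) *
        (∑ j, ((x (Sum.inl j)) ^ 2 + (x (Sum.inr j)) ^ 2)) := by
    intro x s hs
    set u : Fin n → ℝ → ℝ := fun j t => (exp (t • B)).mulVec x (Sum.inl j) with hu_def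
    set v : Fin n → ℝ → ℝ := fun j t => (exp (t • B)).mulVec x (Sum.inr j) with hv_def
    have hu : ∀ j t, HasDerivAt (u j) (a * (1 / k j) * v j t) t := by
      intro j t
      have h := hasDerivAt_expVec B x (Sum.inl j) t
      rw [hB_def, Matrix.neg_mulVec, Pi.neg_apply, Amat_mulVec_inl] at h
      simpa [← ha_def, ← hB_def] using h
    have hv : ∀ j t, HasDerivAt (v j) (-(b * (1 / k j) * u j t + c * (1 / k j) * v j t)) t := by
      intro j t
      have h := hasDerivAt_expVec B x (Sum.inr j) t
      rw [hB_def, Matrix.neg_mulVec, Pi.neg_apply, Amat_mulVec_inr] at h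
      simpa [hb_def, hc_def, hB_def, hu_def, hv_def] using h
    set V : ℝ → ℝ := fun t => ∑ j, (p * u j t ^ 2 + 2 * (u j t * v j t) + r * v j t ^ 2)
      with hV_def
    set V' : ℝ → ℝ := fun t =>
      ∑ j, (1 / k j) * (-(2 * b) * u j t ^ 2 - 2 * a * v j t ^ 2) with hV'_def
    set S : ℝ → ℝ := fun t => ∑ j, (u j t ^ 2 + v j t ^ 2) with hS_def
    have hVd : ∀ t, HasDerivAt V (V' t) t := by
      intro t
      refine HasDerivAt.fun_sum fun j _ => ?_
      have h1 := ((((hu j t).pow 2).const_mul p).add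
        (((hu j t).mul (hv j t)).const_mul 2)).add (((hv j t).pow 2).const_mul r)
      refine h1.congr_deriv ?_
      push_cast
      ring_nf
      linear_combination (2 * (1 / k j) * u j t * v j t) * hpa -
        (2 * (1 / k j) * u j t * v j t) * hrb - (2 * (1 / k j) * v j t ^ 2) * hrc
    have hSV_low : ∀ t, μ * S t ≤ V t := by
      intro t
      rw [hS_def, hV_def, Finset.mul_sum]
      exact Finset.sum_le_sum fun j _ => quad_low _ _
    have hSV_up : ∀ t, V t ≤ L * S t := by
      intro t
      rw [hS_def, hV_def, Finset.mul_sum]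
      exact Finset.sum_le_sum fun j _ => quad_up _ _
    have hS_nonneg : ∀ t, 0 ≤ S t :=
      fun t => Finset.sum_nonneg fun j _ => by positivity
    have hV'le : ∀ t, V' t ≤ -(2 * c₀) * V t := by
      intro t
      have step1 : V' t ≤ -(2 * m / K) * S t := by
        rw [hV'_def, hS_def, Finset.mul_sum]
        refine Finset.sum_le_sum fun j _ => ?_
        have hXneg : -(2 * b) * u j t ^ 2 - 2 * a * v j t ^ 2 ≤
            -(2 * m) * (u j t ^ 2 + v j t ^ 2) := by
          have h1 : m ≤ a := min_le_left _ _
          have h2 : m ≤ b := min_le_right _ _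
          nlinarith [sq_nonneg (u j t), sq_nonneg (v j t)]
        have hXnp : -(2 * b) * u j t ^ 2 - 2 * a * v j t ^ 2 ≤ 0 := by
          nlinarith [sq_nonneg (u j t), sq_nonneg (v j t)]
        have hk1 : (1 : ℝ) / K ≤ 1 / k j := by
          apply one_div_le_one_div_of_le (hk j) (hkK j)
        calc (1 / k j) * (-(2 * b) * u j t ^ 2 - 2 * a * v j t ^ 2)
            ≤ (1 / K) * (-(2 * b) * u j t ^ 2 - 2 * a * v j t ^ 2) :=
              mul_le_mul_of_nonpos_right hk1 hXnp
          _ ≤ (1 / K) * (-(2 * m) * (u j t ^ 2 + v j t ^ 2)) := by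
              apply mul_le_mul_of_nonneg_left hXneg (by positivity)
          _ = -(2 * m / K) * (u j t ^ 2 + v j t ^ 2) := by ring
      have step2 : -(2 * m / K) * S t ≤ -(2 * c₀) * V t := by
        have hSt : V t / L ≤ S t := by
          rw [div_le_iff₀ hL]; linarith [hSV_up t, mul_comm L (S t)]
        have h2 := mul_le_mul_of_nonpos_left hSt (neg_nonpos.mpr (by positivity) : -(2 * m / K) ≤ 0)
        have heq : -(2 * m / K) * (V t / L) = -(2 * c₀) * V t := by
          rw [hc₀_def]; field_simp
        linarith
      linarith
    -- Gronwall
    set g : ℝ → ℝ := fun t => V t * Real.exp (2 * c₀ * t) with hg_def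
    have hgd : ∀ t, HasDerivAt g ((V' t + 2 * c₀ * V t) * Real.exp (2 * c₀ * t)) t := by
      intro t
      have he : HasDerivAt (fun t : ℝ => Real.exp (2 * c₀ * t))
          (Real.exp (2 * c₀ * t) * (2 * c₀)) t := by
        simpa using ((hasDerivAt_id t).const_mul (2 * c₀)).exp
      have := (hVd t).fun_mul he
      exact this.congr_deriv (by ring)
    have hganti : Antitone g := by
      apply antitone_of_deriv_nonpos
      · exact fun t => (hgd t).differentiableAt
      · intro t
        rw [(hgd t).deriv]
        have h1 : V' t + 2 * c₀ * V t ≤ 0 := by linarith [hV'le t]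
        have h2 : (0:ℝ) < Real.exp (2 * c₀ * t) := Real.exp_pos _
        nlinarith
    have hg0 : g s ≤ g 0 := hganti hs
    have hV0 : V s ≤ V 0 * Real.exp (-(2 * c₀ * s)) := by
      rw [hg_def] at hg0
      simp only [mul_zero, Real.exp_zero, mul_one] at hg0
      rw [Real.exp_neg, ← div_eq_mul_inv, le_div_iff₀ (Real.exp_pos _)]
      linarith [hg0]
    -- initial values
    have hu0 : ∀ j, u j 0 = x (Sum.inl j) := by
      intro j; rw [hu_def]; simp [exp_zero]
    have hv0 : ∀ j, v j 0 = x (Sum.inr j) := by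
      intro j; rw [hv_def]; simp [exp_zero]
    have hV0up : V 0 ≤ L * (∑ j, ((x (Sum.inl j)) ^ 2 + (x (Sum.inr j)) ^ 2)) := by
      have := hSV_up 0
      rw [hS_def] at this
      simp only [hu0, hv0] at this
      simpa using this
    have hmain1 : μ * S s ≤ L * (∑ j, ((x (Sum.inl j)) ^ 2 + (x (Sum.inr j)) ^ 2)) *
        Real.exp (-(2 * c₀ * s)) := by
      calc μ * S s ≤ V s := hSV_low s
        _ ≤ V 0 * Real.exp (-(2 * c₀ * s)) := hV0
        _ ≤ L * (∑ j, ((x (Sum.inl j)) ^ 2 + (x (Sum.inr j)) ^ 2)) *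
            Real.exp (-(2 * c₀ * s)) := by
            apply mul_le_mul_of_nonneg_right hV0up (Real.exp_pos _).le
    have hfin : S s ≤ L / μ * Real.exp (-(2 * c₀ * s)) *
        (∑ j, ((x (Sum.inl j)) ^ 2 + (x (Sum.inr j)) ^ 2)) := by
      rw [← le_div_iff₀' hμ] at hmain1
      calc S s ≤ L * (∑ j, ((x (Sum.inl j)) ^ 2 + (x (Sum.inr j)) ^ 2)) *
            Real.exp (-(2 * c₀ * s)) / μ := hmain1
        _ = L / μ * Real.exp (-(2 * c₀ * s)) *
            (∑ j, ((x (Sum.inl j)) ^ 2 + (x (Sum.inr j)) ^ 2)) := by ring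
    exact hfin
  -- operator norm conclusion
  refine ⟨Real.sqrt (L / μ), Real.sqrt_pos.mpr (by positivity), c₀, hc₀, fun s hs => ?_⟩
  have hrw : -(s • Amat n k Γ Ω) = s • B := by rw [hB_def, smul_neg]
  rw [hrw, Matrix.l2_opNorm_def]
  refine ContinuousLinearMap.opNorm_le_bound _ (by positivity) fun z => ?_
  rw [LinearEquiv.trans_apply]
  set x : Fin n ⊕ Fin n → ℝ := (WithLp.equiv 2 _) z with hx_def
  have hzx : ∀ i, z i = x i := fun i => rfl
  have hEz : ∀ i, (Matrix.toEuclideanLin (exp (s • B)) z) i =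
      (exp (s • B)).mulVec x i := by
    intro i
    rw [Matrix.toEuclideanLin_apply]
    rfl
  have hnorm1 : ‖LinearMap.toContinuousLinearMap (Matrix.toEuclideanLin (exp (s • B))) z‖ ^ 2
      = ∑ j, (((exp (s • B)).mulVec x (Sum.inl j)) ^ 2 +
        ((exp (s • B)).mulVec x (Sum.inr j)) ^ 2) := by
    rw [LinearMap.coe_toContinuousLinearMap']
    rw [EuclideanSpace.norm_eq, Real.sq_sqrt (by positivity)]
    rw [Fintype.sum_sum_type]
    simp only [hEz, Real.norm_eq_abs, sq_abs]
    rw [Finset.sum_add_distrib]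
  have hnorm2 : ‖z‖ ^ 2 = ∑ j, ((x (Sum.inl j)) ^ 2 + (x (Sum.inr j)) ^ 2) := by
    rw [EuclideanSpace.norm_eq, Real.sq_sqrt (by positivity)]
    rw [Fintype.sum_sum_type]
    simp only [hzx, Real.norm_eq_abs, sq_abs]
    rw [Finset.sum_add_distrib]
  have hbound := main x s hs
  rw [← hnorm1, ← hnorm2] at hbound
  have hRHS : Real.sqrt (L / μ * Real.exp (-(2 * c₀ * s)) * ‖z‖ ^ 2) =
      Real.sqrt (L / μ) * Real.exp (-(c₀ * s)) * ‖z‖ := by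
    rw [Real.sqrt_mul (by positivity), Real.sqrt_mul (by positivity : (0:ℝ) ≤ L / μ),
      Real.sqrt_sq (norm_nonneg z)]
    congr 1
    rw [← Real.exp_half]
    congr 1
    ring
  calc ‖LinearMap.toContinuousLinearMap (Matrix.toEuclideanLin (exp (s • B))) z‖
      = Real.sqrt (‖LinearMap.toContinuousLinearMap (Matrix.toEuclideanLin (exp (s • B))) z‖ ^ 2) := by
        rw [Real.sqrt_sq (norm_nonneg _)]
    _ ≤ Real.sqrt (L / μ * Real.exp (-(2 * c₀ * s)) * ‖z‖ ^ 2) := Real.sqrt_le_sqrt hbound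
    _ = Real.sqrt (L / μ) * Real.exp (-(c₀ * s)) * ‖z‖ := hRHS

theorem statement6 (n : ℕ) (hn : 0 < n) (k : Fin n → ℝ) (hk : ∀ j, 0 < k j)
    (Γ Ω : ℝ) (hΓ : 0 < Γ) (hΩ : 0 < Ω) :
    ∃ C > (0:ℝ), ∃ Cd > (0:ℝ),
      (∀ s : ℝ, 0 ≤ s →
        ‖NormedSpace.exp (-(s • Amat n k Γ Ω))‖ ≤ C * Real.exp (-(Cd * s))) ∧
      ∀ ε : ℝ, 0 < ε → ∀ t₀ t : ℝ, 0 ≤ t₀ → t₀ ≤ t →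
        ‖NormedSpace.exp (-(((t - t₀) / ε) • Amat n k Γ Ω))‖ ≤
          C * Real.exp (-(Cd * (t - t₀) / ε)) := by
  obtain ⟨C, hC, Cd, hCd, h⟩ := key n hn k hk Γ Ω hΓ hΩ
  refine ⟨C, hC, Cd, hCd, h, fun ε hε t₀ t ht₀ htt => ?_⟩
  have hs : 0 ≤ (t - t₀) / ε := div_nonneg (by linarith) hε.le
  have h2 := h _ hs
  rw [show -(Cd * (t - t₀) / ε) = -(Cd * ((t - t₀) / ε)) by ring]
  exact h2
end
end

section
/- Let ε > 0, C₄ ≥ 0, and let t₀ ≤ T be real numbers. Let J : [t₀, T] → M_m(ℝ) be continuous with ‖J(t)‖ ≤ C₄ for all t ∈ [t₀, T], and let u : [t₀, T] → ℝ^m be differentiable with u'(t) = (−(1/ε) D¹ + J(t)) u(t) for all t ∈ [t₀, T]. Then, with c = max(c_1, …, c_m), for every t ∈ [t₀, T], ‖u(t)‖ ≤ ‖u(t₀)‖ · exp((C₄ − 1/(c ε)) (t − t₀)). -/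
open scoped Matrix.Norms.L2Operator

noncomputable section

set_option maxHeartbeats 1000000 in
theorem statement7 (m : ℕ) (hm : 0 < m)
    (c : Fin m → ℝ) (hc : ∀ i, 0 < c i)
    (cm : ℝ) (hcm : IsGreatest (Set.range c) cm)
    (ε C₄ t₀ T : ℝ) (hε : 0 < ε) (hC₄ : 0 ≤ C₄) (ht₀T : t₀ ≤ T)
    (J : ℝ → Matrix (Fin m) (Fin m) ℝ)
    (hJcont : ContinuousOn J (Set.Icc t₀ T))
    (hJbdd : ∀ t ∈ Set.Icc t₀ T, ‖J t‖ ≤ C₄)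
    (u : ℝ → EuclideanSpace ℝ (Fin m))
    (hu : ∀ t ∈ Set.Icc t₀ T,
      HasDerivWithinAt u
        (Matrix.toEuclideanCLM (𝕜 := ℝ)
          ((-(1 / ε)) • Matrix.diagonal (fun i => 1 / c i) + J t) (u t))
        (Set.Icc t₀ T) t) :
    ∀ t ∈ Set.Icc t₀ T,
      ‖u t‖ ≤ ‖u t₀‖ * Real.exp ((C₄ - 1 / (cm * ε)) * (t - t₀)) := by
  obtain ⟨i₀, hi₀⟩ := hcm.1
  have hcm0 : 0 < cm := hi₀ ▸ hc i₀
  set K : ℝ := C₄ - 1 / (cm * ε) with hKdef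
  set v : ℝ → EuclideanSpace ℝ (Fin m) := fun s =>
    Matrix.toEuclideanCLM (𝕜 := ℝ)
      ((-(1 / ε)) • Matrix.diagonal (fun i => 1 / c i) + J s) (u s) with hv
  have hucont : ContinuousOn u (Set.Icc t₀ T) := fun s hs => (hu s hs).continuousWithinAt
  -- coordinates of toEuclideanCLM
  have hcoord : ∀ (B : Matrix (Fin m) (Fin m) ℝ) (x : EuclideanSpace ℝ (Fin m)) (i : Fin m),
      (Matrix.toEuclideanCLM (𝕜 := ℝ) B x) i = B.mulVec (fun j => x j) i := by
    intro B x i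
    have h := Matrix.ofLp_toEuclideanCLM (𝕜 := ℝ) B x
    have := congrFun h i
    simpa [WithLp.equiv] using this
  -- key inner product bound
  have key : ∀ s ∈ Set.Icc t₀ T, (inner ℝ (u s) (v s) : ℝ) ≤ K * ‖u s‖ ^ 2 := by
    intro s hs
    set x : EuclideanSpace ℝ (Fin m) := u s with hx
    have hsplit : v s = (-(1 / ε)) •
        (Matrix.toEuclideanCLM (𝕜 := ℝ) (Matrix.diagonal fun i => 1 / c i) x)
        + Matrix.toEuclideanCLM (𝕜 := ℝ) (J s) x := by
      simp [hv, hx, map_add, map_smul]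
    have hdiag : (1 / cm) * ‖x‖ ^ 2 ≤
        (inner ℝ x (Matrix.toEuclideanCLM (𝕜 := ℝ) (Matrix.diagonal fun i => 1 / c i) x) : ℝ) := by
      have hinner : (inner ℝ x (Matrix.toEuclideanCLM (𝕜 := ℝ)
          (Matrix.diagonal fun i => 1 / c i) x) : ℝ) = ∑ i, x i * ((1 / c i) * x i) := by
        rw [PiLp.inner_apply]
        refine Finset.sum_congr rfl fun i _ => ?_
        rw [hcoord, Matrix.mulVec_diagonal]
        simp [RCLike.inner_apply]; ring
      have hnorm : ‖x‖ ^ 2 = ∑ i, x i * x i := by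
        rw [← real_inner_self_eq_norm_sq, PiLp.inner_apply]
        simp [RCLike.inner_apply, sq]
      rw [hinner, hnorm, Finset.mul_sum]
      refine Finset.sum_le_sum fun i _ => ?_
      have hci : c i ≤ cm := hcm.2 ⟨i, rfl⟩
      have h1 : 1 / cm ≤ 1 / c i := one_div_le_one_div_of_le (hc i) hci
      nlinarith [sq_nonneg (x i), hc i]
    have hJ : (inner ℝ x (Matrix.toEuclideanCLM (𝕜 := ℝ) (J s) x) : ℝ) ≤ C₄ * ‖x‖ ^ 2 := by
      calc (inner ℝ x (Matrix.toEuclideanCLM (𝕜 := ℝ) (J s) x) : ℝ)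
          ≤ ‖x‖ * ‖Matrix.toEuclideanCLM (𝕜 := ℝ) (J s) x‖ := real_inner_le_norm _ _
        _ ≤ ‖x‖ * (‖J s‖ * ‖x‖) := by
            have hb : ‖Matrix.toEuclideanCLM (𝕜 := ℝ) (J s) x‖ ≤ ‖J s‖ * ‖x‖ := by
              calc ‖Matrix.toEuclideanCLM (𝕜 := ℝ) (J s) x‖
                  ≤ ‖Matrix.toEuclideanCLM (𝕜 := ℝ) (J s)‖ * ‖x‖ :=
                  ContinuousLinearMap.le_opNorm _ _
                _ = ‖J s‖ * ‖x‖ := by rw [← Matrix.cstar_norm_def]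
            exact mul_le_mul_of_nonneg_left hb (norm_nonneg x)
        _ ≤ C₄ * ‖x‖ ^ 2 := by nlinarith [hJbdd s hs, norm_nonneg x, sq_nonneg ‖x‖]
    rw [hsplit, inner_add_right, real_inner_smul_right]
    have hεinv : 0 < 1 / ε := by positivity
    have h1 : -(1 / ε) * (inner ℝ x (Matrix.toEuclideanCLM (𝕜 := ℝ)
        (Matrix.diagonal fun i => 1 / c i) x) : ℝ) ≤ -(1 / ε) * ((1 / cm) * ‖x‖ ^ 2) := by
      nlinarith
    have hrw : K = C₄ - (1 / ε) * (1 / cm) := by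
      rw [hKdef]; field_simp
    nlinarith [hJ]
  -- derivative of squared norm
  have hg : ∀ s ∈ Set.Ico t₀ T, HasDerivWithinAt (fun τ => ‖u τ‖ ^ 2)
      (2 * (inner ℝ (u s) (v s) : ℝ)) (Set.Ici s) s := by
    intro s hs
    have h1 : HasDerivWithinAt u (v s) (Set.Ici s) s :=
      (hu s ⟨hs.1, hs.2.le⟩).mono_of_mem_nhdsWithin
        (Filter.mem_of_superset (Icc_mem_nhdsGE hs.2) (Set.Icc_subset_Icc_left hs.1))
    exact h1.norm_sq
  have main := le_gronwallBound_of_liminf_deriv_right_le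
    (f := fun τ => ‖u τ‖ ^ 2) (f' := fun s => 2 * (inner ℝ (u s) (v s) : ℝ))
    (δ := ‖u t₀‖ ^ 2) (K := 2 * K) (ε := 0) (a := t₀) (b := T)
    ((hucont.norm).pow 2)
    (fun s hs r hr => (hg s hs).liminf_right_slope_le hr)
    le_rfl
    (fun s hs => by
      have hk := key s ⟨hs.1, hs.2.le⟩
      show 2 * (inner ℝ (u s) (v s) : ℝ) ≤ 2 * K * ‖u s‖ ^ 2 + 0
      nlinarith)
  intro t ht
  have h2 := main t ht
  rw [gronwallBound_ε0] at h2
  have hrhs : (0:ℝ) ≤ ‖u t₀‖ * Real.exp (K * (t - t₀)) := by positivity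
  refine le_of_pow_le_pow_left₀ two_ne_zero hrhs ?_
  have hexp : (Real.exp (K * (t - t₀))) ^ 2 = Real.exp (2 * K * (t - t₀)) := by
    rw [sq, ← Real.exp_add]; ring_nf
  calc ‖u t‖ ^ 2 ≤ ‖u t₀‖ ^ 2 * Real.exp (2 * K * (t - t₀)) := h2
    _ = (‖u t₀‖ * Real.exp (K * (t - t₀))) ^ 2 := by rw [mul_pow, hexp]
end
end
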